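/- arXiv:2011.05415 — 5 statements merged into one kernel-verified Lean document; each statement's English description precedes it below -/
import Mathlib

section
/- For a prime p, a positive integer n, and a quadratic form Q over ℚ_p in n variables, the quotient set R(Q(ℕ^n)) is dense in ℚ_p if and only if R(Q(ℤ^n)) is dense in ℚ_p. -/
open Filter Topology

lemma quadform_continuous {p : ℕ} [Fact p.Prime] {n : ℕ}
    (Q : QuadraticForm ℚ_[p] (Fin n → ℚ_[p])) : Continuous Q := by
  haveI : Invertible (2 : ℚ_[p]) := invertibleOfNonzero two_ne_zero
  set B := QuadraticMap.associated (R := ℚ_[p]) Q with hB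
  set e : Fin n → (Fin n → ℚ_[p]) := fun i => Pi.single i (1 : ℚ_[p]) with he
  have key : ∀ x : Fin n → ℚ_[p],
      Q x = ∑ i, ∑ j, x i * x j * B (e i) (e j) := by
    intro x
    have hx : x = ∑ i, x i • e i := by
      funext j
      simp [he, Finset.sum_apply, Pi.single_apply]
    conv_lhs => rw [← QuadraticMap.associated_eq_self_apply ℚ_[p] Q x, hx]
    simp only [map_sum, LinearMap.sum_apply, map_smul, LinearMap.smul_apply, smul_eq_mul,
      Finset.mul_sum, mul_assoc]
    have hsym : ∀ u v, B u v = B v u := fun u v =>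
      (QuadraticMap.associated_isSymm ℚ_[p] Q u v).symm ▸ rfl
    exact Finset.sum_congr rfl fun a _ => Finset.sum_congr rfl fun b _ => by rw [hsym]
  have : (Q : (Fin n → ℚ_[p]) → ℚ_[p]) =
      fun x => ∑ i, ∑ j, x i * x j * B (e i) (e j) := funext key
  rw [this]
  exact continuous_finset_sum _ fun i _ => continuous_finset_sum _ fun j _ =>
    (((continuous_apply i).mul (continuous_apply j)).mul continuous_const)

lemma nat_approx {p : ℕ} [Fact p.Prime] {n : ℕ} (u : Fin n → ℤ) :
    Tendsto (fun k : ℕ => fun i => (((u i % ((p : ℤ))^k).toNat : ℕ) : ℚ_[p])) atTop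
      (𝓝 (fun i => (u i : ℚ_[p]))) := by
  have hp1 : (1 : ℝ) < p := by exact_mod_cast (Fact.out : p.Prime).one_lt
  rw [tendsto_pi_nhds]
  intro i
  rw [← tendsto_sub_nhds_zero_iff]
  apply squeeze_zero_norm (a := fun k => ((p : ℝ)⁻¹) ^ k)
  · intro k
    have hpk : (0 : ℤ) < (p : ℤ) ^ k := pow_pos (by exact_mod_cast (Fact.out : p.Prime).pos) k
    have hcast : ((((u i % ((p : ℤ))^k).toNat : ℕ) : ℚ_[p])) = (((u i % ((p : ℤ))^k) : ℤ) : ℚ_[p]) := by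
      rw [← Int.cast_natCast, Int.toNat_of_nonneg (Int.emod_nonneg _ hpk.ne')]
    rw [hcast]
    have hdiff : ((u i % ((p : ℤ))^k : ℤ) : ℚ_[p]) - ((u i : ℤ) : ℚ_[p]) =
        -(((p : ℚ_[p]))^k * ((u i / (p : ℤ)^k : ℤ) : ℚ_[p])) := by
      rw [Int.emod_def]
      push_cast
      ring
    rw [hdiff, norm_neg]
    calc ‖((p : ℚ_[p]))^k * ((u i / (p : ℤ)^k : ℤ) : ℚ_[p])‖
        = ‖((p : ℚ_[p]))^k‖ * ‖((u i / (p : ℤ)^k : ℤ) : ℚ_[p])‖ := norm_mul _ _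
      _ ≤ ‖((p : ℚ_[p]))^k‖ * 1 :=
          mul_le_mul_of_nonneg_left (Padic.norm_int_le_one _) (norm_nonneg _)
      _ = ((p : ℝ)⁻¹) ^ k := by
          rw [mul_one, Padic.norm_p_pow, inv_pow, ← zpow_natCast, ← zpow_neg]
  · exact tendsto_pow_atTop_nhds_zero_of_lt_one (by positivity) (inv_lt_one_of_one_lt₀ hp1)

def quotSet {K : Type*} [DivisionRing K] (A : Set K) : Set K :=
  {x | ∃ a ∈ A, ∃ b ∈ A, b ≠ 0 ∧ x = a / b}

lemma quotSet_mono {K : Type*} [DivisionRing K] {A B : Set K} (h : A ⊆ B) :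
    quotSet A ⊆ quotSet B := by
  rintro x ⟨a, ha, b, hb, hb0, rfl⟩
  exact ⟨a, h ha, b, h hb, hb0, rfl⟩

theorem stmt0 (p : ℕ) [Fact p.Prime] (n : ℕ) (hn : 0 < n)
    (Q : QuadraticForm ℚ_[p] (Fin n → ℚ_[p])) :
    Dense (quotSet {y : ℚ_[p] | ∃ v : Fin n → ℕ, Q (fun i => (v i : ℚ_[p])) = y}) ↔
    Dense (quotSet {y : ℚ_[p] | ∃ v : Fin n → ℤ, Q (fun i => (v i : ℚ_[p])) = y}) := by
  set A := {y : ℚ_[p] | ∃ v : Fin n → ℕ, Q (fun i => (v i : ℚ_[p])) = y} with hA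
  set Bs := {y : ℚ_[p] | ∃ v : Fin n → ℤ, Q (fun i => (v i : ℚ_[p])) = y} with hBs
  constructor
  · refine fun h => h.mono (quotSet_mono ?_)
    rintro y ⟨v, rfl⟩
    exact ⟨fun i => (v i : ℤ), by push_cast; rfl⟩
  · intro h
    have hsub : quotSet Bs ⊆ closure (quotSet A) := by
      rintro x ⟨a, ⟨v, hv⟩, b, ⟨w, hw⟩, hb0, rfl⟩
      set f : (Fin n → ℤ) → ℕ → ℚ_[p] :=
        fun u k => Q (fun i => (((u i % ((p : ℤ))^k).toNat : ℕ) : ℚ_[p])) with hf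
      have htend : ∀ u : Fin n → ℤ,
          Tendsto (f u) atTop (𝓝 (Q (fun i => (u i : ℚ_[p])))) := fun u =>
        ((quadform_continuous Q).tendsto _).comp (nat_approx u)
      have hbne : ∀ᶠ k in atTop, f w k ≠ 0 :=
        (htend w).eventually_ne (by rw [hw]; exact hb0)
      have hdiv : Tendsto (fun k => f v k / f w k) atTop (𝓝 (a / b)) := by
        rw [← hv, ← hw]
        exact (htend v).div (htend w) (by rw [hw]; exact hb0)
      exact mem_closure_of_tendsto hdiv
        (hbne.mono fun k hk => ⟨f v k, ⟨_, rfl⟩, f w k, ⟨_, rfl⟩, hk, rfl⟩)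
    intro x
    exact closure_minimal hsub isClosed_closure (h x)
end

section
/- If Q is a nonsingular isotropic quadratic form over ℚ_p in n variables, then R(Q(ℤ_p^n)) = ℚ_p; in particular R(Q(ℤ^n)) is dense in ℚ_p. -/
private theorem rep_aux (p : ℕ) [Fact p.Prime] (n : ℕ)
    (Q : QuadraticForm ℚ_[p] (Fin n → ℚ_[p]))
    (hns : ∀ x : Fin n → ℚ_[p], (∀ y, QuadraticMap.polar (⇑Q) x y = 0) → x = 0)
    (hiso : ∃ x : Fin n → ℚ_[p], x ≠ 0 ∧ Q x = 0) (c : ℚ_[p]) :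
    ∃ v, Q v = c := by
  obtain ⟨x, hx0, hQx⟩ := hiso
  have : ¬ (∀ y, QuadraticMap.polar (⇑Q) x y = 0) := fun h => hx0 (hns x h)
  push_neg at this
  obtain ⟨y, hy⟩ := this
  set t : ℚ_[p] := (c - Q y) / QuadraticMap.polar (⇑Q) x y with ht
  refine ⟨t • x + y, ?_⟩
  have hadd : Q (t • x + y) = Q (t • x) + Q y + QuadraticMap.polar (⇑Q) (t • x) y := by
    simp [QuadraticMap.polar]
  rw [hadd, QuadraticMap.map_smul, QuadraticMap.polar_smul_left, hQx]
  rw [smul_zero, zero_add, smul_eq_mul, ht, div_mul_cancel₀ _ hy]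
  ring

private theorem scale_aux (p : ℕ) [Fact p.Prime] (n : ℕ) (v : Fin n → ℚ_[p]) :
    ∃ k0 : ℕ, ∀ k ≥ k0, ∃ w : Fin n → ℤ_[p],
      (fun i => (w i : ℚ_[p])) = (p : ℚ_[p]) ^ k • v := by
  have hp1 : (1:ℝ) < p := by exact_mod_cast (Fact.out : p.Prime).one_lt
  have key : ∀ i, ∃ ki : ℕ, ‖v i‖ ≤ (p:ℝ) ^ ki := fun i => by
    obtain ⟨ki, h⟩ := pow_unbounded_of_one_lt (‖v i‖) hp1
    exact ⟨ki, h.le⟩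
  choose kf hkf using key
  refine ⟨Finset.univ.sup kf, fun k hk => ?_⟩
  have hmem : ∀ i, ‖(p:ℚ_[p]) ^ k * v i‖ ≤ 1 := by
    intro i
    have hki : kf i ≤ k := le_trans (Finset.le_sup (Finset.mem_univ i)) hk
    rw [norm_mul, norm_pow, Padic.norm_p]
    calc ((p:ℝ)⁻¹) ^ k * ‖v i‖ ≤ ((p:ℝ)⁻¹) ^ k * (p:ℝ) ^ (kf i) := by
          apply mul_le_mul_of_nonneg_left (hkf i) (by positivity)
      _ ≤ 1 := by
          rw [inv_pow, inv_mul_le_iff₀ (by positivity), mul_one]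
          exact pow_le_pow_right₀ hp1.le hki
  exact ⟨fun i => ⟨(p:ℚ_[p]) ^ k * v i, hmem i⟩, rfl⟩

private theorem qcont_aux (p : ℕ) [Fact p.Prime] (n : ℕ)
    (Q : QuadraticForm ℚ_[p] (Fin n → ℚ_[p])) : Continuous ⇑Q := by
  haveI : Invertible (2 : ℚ_[p]) := invertibleOfNonzero two_ne_zero
  set B := QuadraticMap.associated (R := ℚ_[p]) Q with hBdef
  have hB : ∀ x, Q x = B x x := fun x =>
    (QuadraticMap.associated_eq_self_apply ℚ_[p] Q x).symm
  have hQ : ⇑Q = fun x : Fin n → ℚ_[p] =>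
      ∑ i, ∑ j, x i * x j *
        B (fun m => if i = m then 1 else 0) (fun m => if j = m then 1 else 0) := by
    funext x
    rw [hB]
    conv_lhs => rw [pi_eq_sum_univ x, pi_eq_sum_univ x]
    simp only [map_sum, LinearMap.sum_apply, LinearMap.map_smul, LinearMap.smul_apply,
      smul_eq_mul, Finset.mul_sum]
    rw [Finset.sum_comm]
    exact Finset.sum_congr rfl fun i _ => Finset.sum_congr rfl
      fun j _ => by simp [Finset.sum_apply]; ring
  rw [hQ]
  refine continuous_finset_sum _ fun i _ => continuous_finset_sum _ fun j _ => ?_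
  exact (((continuous_apply i).mul (continuous_apply j)).mul continuous_const)

private theorem key_aux (p : ℕ) [Fact p.Prime] (n : ℕ)
    (Q : QuadraticForm ℚ_[p] (Fin n → ℚ_[p]))
    (hns : ∀ x : Fin n → ℚ_[p], (∀ y, QuadraticMap.polar (⇑Q) x y = 0) → x = 0)
    (hiso : ∃ x : Fin n → ℚ_[p], x ≠ 0 ∧ Q x = 0) (x : ℚ_[p]) :
    ∃ w z : Fin n → ℤ_[p], Q (fun i => (z i : ℚ_[p])) ≠ 0 ∧
      Q (fun i => (w i : ℚ_[p])) / Q (fun i => (z i : ℚ_[p])) = x := by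
  obtain ⟨v, hv⟩ := rep_aux p n Q hns hiso x
  obtain ⟨u, hu⟩ := rep_aux p n Q hns hiso 1
  obtain ⟨k1, hk1⟩ := scale_aux p n v
  obtain ⟨k2, hk2⟩ := scale_aux p n u
  obtain ⟨w, hw⟩ := hk1 (max k1 k2) (le_max_left _ _)
  obtain ⟨z, hz⟩ := hk2 (max k1 k2) (le_max_right _ _)
  set K := max k1 k2
  have hpK : ((p:ℚ_[p]) ^ K) ≠ 0 := pow_ne_zero _ (by
    exact_mod_cast (Nat.cast_ne_zero (R := ℚ_[p])).2 (Fact.out : p.Prime).ne_zero)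
  have hQw : Q (fun i => (w i : ℚ_[p])) = ((p:ℚ_[p]) ^ K * (p:ℚ_[p]) ^ K) * x := by
    rw [hw, QuadraticMap.map_smul, hv, smul_eq_mul]
  have hQz : Q (fun i => (z i : ℚ_[p])) = (p:ℚ_[p]) ^ K * (p:ℚ_[p]) ^ K := by
    rw [hz, QuadraticMap.map_smul, hu, smul_eq_mul, mul_one]
  refine ⟨w, z, ?_, ?_⟩
  · rw [hQz]; exact mul_ne_zero hpK hpK
  · rw [hQw, hQz]
    field_simp

theorem stmt3 (p : ℕ) [Fact p.Prime] (n : ℕ)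
    (Q : QuadraticForm ℚ_[p] (Fin n → ℚ_[p]))
    (hns : ∀ x : Fin n → ℚ_[p], (∀ y, QuadraticMap.polar (⇑Q) x y = 0) → x = 0)
    (hiso : ∃ x : Fin n → ℚ_[p], x ≠ 0 ∧ Q x = 0) :
    quotSet {y : ℚ_[p] | ∃ v : Fin n → ℤ_[p], Q (fun i => (v i : ℚ_[p])) = y} = Set.univ ∧
    Dense (quotSet {y : ℚ_[p] | ∃ v : Fin n → ℤ, Q (fun i => (v i : ℚ_[p])) = y}) := by
  constructor
  · ext x
    simp only [Set.mem_univ, iff_true]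
    obtain ⟨w, z, hz0, hwz⟩ := key_aux p n Q hns hiso x
    exact ⟨_, ⟨w, rfl⟩, _, ⟨z, rfl⟩, hz0, hwz.symm⟩
  · rw [Metric.dense_iff]
    intro x r hr
    obtain ⟨w, z, hz0, hwz⟩ := key_aux p n Q hns hiso x
    set A : Fin n → ℚ_[p] := fun i => (w i : ℚ_[p]) with hA
    set Bv : Fin n → ℚ_[p] := fun i => (z i : ℚ_[p]) with hBv
    have hQc := qcont_aux p n Q
    -- the set of pairs (u,v) with Q v ≠ 0 and Q u / Q v ∈ ball x r is a nbhd of (A, Bv)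
    have hF : ContinuousAt (fun pr : (Fin n → ℚ_[p]) × (Fin n → ℚ_[p]) => Q pr.1 / Q pr.2)
        (A, Bv) := by
      exact ContinuousAt.div ((hQc.comp continuous_fst).continuousAt)
        ((hQc.comp continuous_snd).continuousAt) hz0
    have hG : ContinuousAt (fun pr : (Fin n → ℚ_[p]) × (Fin n → ℚ_[p]) => Q pr.2)
        (A, Bv) := (hQc.comp continuous_snd).continuousAt
    have hU1 : (fun pr : (Fin n → ℚ_[p]) × (Fin n → ℚ_[p]) => Q pr.1 / Q pr.2) ⁻¹'
        Metric.ball x r ∈ nhds (A, Bv) := by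
      apply hF.preimage_mem_nhds
      rw [hwz]
      exact Metric.ball_mem_nhds x hr
    have hU2 : (fun pr : (Fin n → ℚ_[p]) × (Fin n → ℚ_[p]) => Q pr.2) ⁻¹'
        {t : ℚ_[p] | t ≠ 0} ∈ nhds (A, Bv) := by
      apply hG.preimage_mem_nhds
      exact IsOpen.mem_nhds isOpen_ne hz0
    obtain ⟨δ, hδ, hball⟩ := Metric.mem_nhds_iff.1 (Filter.inter_mem hU1 hU2)
    -- approximate w and z coordinatewise by integers
    have happrox : ∀ c : ℤ_[p], ∃ m : ℤ, dist ((m : ℚ_[p])) (c : ℚ_[p]) < δ := by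
      intro c
      obtain ⟨m, hm⟩ := (PadicInt.denseRange_intCast (p := p)).exists_dist_lt c hδ
      refine ⟨m, ?_⟩
      rw [dist_eq_norm]
      have hcast : ((m : ℚ_[p]) - (c : ℚ_[p])) = (((m - c : ℤ_[p]) : ℚ_[p])) := by push_cast; ring
      rw [hcast, ← PadicInt.norm_def, norm_sub_rev]
      rwa [dist_eq_norm] at hm
    choose aw haw using fun i => happrox (w i)
    choose az haz using fun i => happrox (z i)
    set uA : Fin n → ℚ_[p] := fun i => ((aw i : ℚ_[p])) with huA
    set uB : Fin n → ℚ_[p] := fun i => ((az i : ℚ_[p])) with huB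
    have hmem : (uA, uB) ∈ Metric.ball (A, Bv) δ := by
      rw [Metric.mem_ball, Prod.dist_eq]
      refine max_lt ?_ ?_
      · rw [dist_pi_lt_iff hδ]; exact haw
      · rw [dist_pi_lt_iff hδ]; exact haz
    have := hball hmem
    obtain ⟨h1, h2⟩ := this
    refine ⟨Q uA / Q uB, h1, ?_⟩
    exact ⟨Q uA, ⟨aw, rfl⟩, Q uB, ⟨az, rfl⟩, h2, rfl⟩
end

section
/- Let Q be a quadratic form over ℚ_p in n variables (with integer, or more generally p-adic, coefficients when restricted to ℤ^n). Then R(Q(ℤ^n)) is dense in ℚ_p if and only if R(Q(ℚ_p^n)) = ℚ_p. -/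
open Polynomial

section aux

variable {p : ℕ} [Fact p.Prime]

lemma norm_two_le_one : ‖(2 : ℚ_[p])‖ ≤ 1 := by
  have := Padic.norm_int_le_one (p := p) 2
  push_cast at this
  exact this

lemma sq_of_close (b : ℤ_[p])
    (h : ‖(1 : ℤ_[p]) - b‖ < ‖(2 : ℤ_[p])‖ ^ 2) : ∃ z : ℤ_[p], z ^ 2 = b := by
  have key : ‖(X ^ 2 - C b : ℤ_[p][X]).eval 1‖ <
      ‖(X ^ 2 - C b : ℤ_[p][X]).derivative.eval 1‖ ^ 2 := by
    simpa [one_add_one_eq_two] using h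
  obtain ⟨z, hz, -⟩ := hensels_lemma key
  exact ⟨z, by simpa [sub_eq_zero] using hz⟩

lemma sq_class (x y : ℚ_[p]) (hx : x ≠ 0)
    (h : ‖y - x‖ < ‖x‖ * ‖(2 : ℚ_[p])‖ ^ 2) :
    ∃ c : ℚ_[p], c ≠ 0 ∧ y = x * c ^ 2 := by
  have h2 : ‖(2 : ℚ_[p])‖ ^ 2 ≤ 1 :=
    pow_le_one₀ (norm_nonneg _) norm_two_le_one
  have hxpos : (0 : ℝ) < ‖x‖ := norm_pos_iff.mpr hx
  set b0 : ℚ_[p] := y / x with hb0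
  have h1b : ‖1 - b0‖ < ‖(2 : ℚ_[p])‖ ^ 2 := by
    have : (1 : ℚ_[p]) - b0 = (x - y) / x := by rw [hb0]; field_simp
    rw [this, norm_div]
    rw [div_lt_iff₀ hxpos]
    calc ‖x - y‖ = ‖y - x‖ := by rw [← norm_neg]; ring_nf
    _ < ‖x‖ * ‖(2 : ℚ_[p])‖ ^ 2 := h
    _ = ‖(2 : ℚ_[p])‖ ^ 2 * ‖x‖ := by ring
  have hb0le : ‖b0‖ ≤ 1 := by
    have : b0 = 1 - (1 - b0) := by ring
    rw [this, sub_eq_add_neg]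
    refine le_trans (Padic.nonarchimedean _ _) ?_
    simp only [norm_one, norm_neg]
    exact max_le le_rfl (le_of_lt (lt_of_lt_of_le h1b h2))
  set b : ℤ_[p] := ⟨b0, hb0le⟩ with hb
  have hnb : ‖(1 : ℤ_[p]) - b‖ < ‖(2 : ℤ_[p])‖ ^ 2 := by
    rw [PadicInt.norm_def, PadicInt.norm_def]
    push_cast
    exact h1b
  obtain ⟨z, hz⟩ := sq_of_close b hnb
  have hzq : ((z : ℚ_[p])) ^ 2 = b0 := by
    have := congrArg (fun t : ℤ_[p] => (t : ℚ_[p])) hz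
    push_cast at this
    simpa [hb] using this
  have hy : y = x * (z : ℚ_[p]) ^ 2 := by
    rw [hzq, hb0]; field_simp
  refine ⟨(z : ℚ_[p]), ?_, hy⟩
  intro hz0
  rw [hz0] at hy
  simp at hy
  rw [hy] at h
  simp only [zero_sub, norm_neg] at h
  nlinarith [h2, hxpos]

lemma Q_cont {n : ℕ} (Q : QuadraticForm ℚ_[p] (Fin n → ℚ_[p])) :
    Continuous fun z => Q z := by
  haveI : Invertible (2 : ℚ_[p]) := invertibleOfNonzero two_ne_zero
  set B := QuadraticMap.associated (R := ℚ_[p]) Q with hB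
  let L : (Fin n → ℚ_[p]) →ₗ[ℚ_[p]] ((Fin n → ℚ_[p]) →L[ℚ_[p]] ℚ_[p]) :=
    { toFun := fun z => LinearMap.toContinuousLinearMap (B z)
      map_add' := by intro a b; ext y; simp
      map_smul' := by intro a b; ext y; simp }
  have hL : Continuous L := L.continuous_of_finiteDimensional
  have hc : Continuous fun z : Fin n → ℚ_[p] => (L z) z :=
    isBoundedBilinearMap_apply.continuous.comp (hL.prodMk continuous_id)
  have : (fun z : Fin n → ℚ_[p] => Q z) = fun z => (L z) z := by
    funext z
    show Q z = B z z
    exact (QuadraticMap.associated_eq_self_apply ℚ_[p] Q z).symm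
  rw [this]; exact hc

-- density of scaled integer vectors
lemma scaled_int_dense {n : ℕ} (v w : Fin n → ℚ_[p]) {δ : ℝ} (hδ : 0 < δ) :
    ∃ (c : ℚ_[p]) (u u' : Fin n → ℤ), c ≠ 0 ∧
      dist (c • fun i => ((u i : ℚ_[p]))) v < δ ∧
      dist (c • fun i => ((u' i : ℚ_[p]))) w < δ := by
  -- choose k with p^k * (v i), p^k * (w i) integral
  have hp1 : ‖(p : ℚ_[p])‖ < 1 := by
    rw [Padic.norm_p]
    exact inv_lt_one_of_one_lt₀ (by exact_mod_cast (Fact.out : p.Prime).one_lt)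
  have hp0 : (p : ℚ_[p]) ≠ 0 := by
    exact_mod_cast (Fact.out : p.Prime).ne_zero
  have hppos : (0 : ℝ) < ‖(p : ℚ_[p])‖ := norm_pos_iff.mpr hp0
  have key : ∀ z : ℚ_[p], ∃ k : ℕ, ∀ m : ℕ, k ≤ m → ‖(p : ℚ_[p]) ^ m * z‖ ≤ 1 := by
    intro z
    obtain ⟨k, hk⟩ := exists_pow_lt_of_lt_one
      (show (0:ℝ) < (1 + ‖z‖)⁻¹ by positivity) hp1
    refine ⟨k, fun m hm => ?_⟩
    rw [norm_mul, norm_pow]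
    have h1 : ‖(p : ℚ_[p])‖ ^ m ≤ ‖(p : ℚ_[p])‖ ^ k :=
      pow_le_pow_of_le_one (le_of_lt hppos) (le_of_lt hp1) hm
    calc ‖(p:ℚ_[p])‖ ^ m * ‖z‖ ≤ ‖(p:ℚ_[p])‖ ^ k * ‖z‖ :=
          mul_le_mul_of_nonneg_right h1 (norm_nonneg _)
      _ ≤ (1 + ‖z‖)⁻¹ * (1 + ‖z‖) := by
          apply mul_le_mul (le_of_lt hk) ?_ (norm_nonneg _) (by positivity)
          linarith [norm_nonneg z]
      _ = 1 := by
          rw [inv_mul_cancel₀]; positivity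
  choose g hg using key
  -- k := sup over coordinates
  set k : ℕ := (Finset.univ : Finset (Fin n)).sup (fun i => max (g (v i)) (g (w i))) with hk
  have hsup : ∀ i : Fin n, max (g (v i)) (g (w i)) ≤ k :=
    fun i => Finset.le_sup (f := fun i => max (g (v i)) (g (w i))) (Finset.mem_univ i)
  have hvk : ∀ i, ‖(p : ℚ_[p]) ^ k * v i‖ ≤ 1 := fun i =>
    hg (v i) k (le_trans (le_max_left _ _) (hsup i))
  have hwk : ∀ i, ‖(p : ℚ_[p]) ^ k * w i‖ ≤ 1 := fun i =>
    hg (w i) k (le_trans (le_max_right _ _) (hsup i))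
  set c : ℚ_[p] := ((p : ℚ_[p]) ^ k)⁻¹ with hc
  have hck : (p : ℚ_[p]) ^ k ≠ 0 := pow_ne_zero _ hp0
  have hcne : c ≠ 0 := inv_ne_zero hck
  -- approximate each coordinate by an integer
  have hint : ∀ z : ℚ_[p], ‖z‖ ≤ 1 → ∀ ε : ℝ, 0 < ε → ∃ m : ℤ, ‖(m : ℚ_[p]) - z‖ < ε := by
    intro z hz ε hε
    obtain ⟨m, hm⟩ := (PadicInt.denseRange_intCast (p := p)).exists_dist_lt ⟨z, hz⟩ hε
    refine ⟨m, ?_⟩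
    have : dist (⟨z, hz⟩ : ℤ_[p]) (m : ℤ_[p]) = ‖((m : ℚ_[p])) - z‖ := by
      erw [Subtype.dist_eq, dist_eq_norm, ← norm_neg]
      push_cast
      ring_nf
    rw [← this]; exact hm
  set ε' : ℝ := δ * ‖(p : ℚ_[p])‖ ^ k with hε'
  have hε'pos : 0 < ε' := by positivity
  have happrox : ∀ z : ℚ_[p], ‖(p : ℚ_[p]) ^ k * z‖ ≤ 1 →
      ∃ m : ℤ, dist (c * (m : ℚ_[p])) z < δ := by
    intro z hz
    obtain ⟨m, hm⟩ := hint _ hz ε' hε'pos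
    refine ⟨m, ?_⟩
    have : c * (m : ℚ_[p]) - z = c * ((m : ℚ_[p]) - (p : ℚ_[p]) ^ k * z) := by
      rw [hc]
      field_simp
    rw [dist_eq_norm, this, norm_mul]
    have hcnorm : ‖c‖ = (‖(p : ℚ_[p])‖ ^ k)⁻¹ := by
      rw [hc, norm_inv, norm_pow]
    rw [hcnorm]
    rw [inv_mul_lt_iff₀ (by positivity)]
    calc ‖(m : ℚ_[p]) - (p:ℚ_[p]) ^ k * z‖ < ε' := hm
      _ = ‖(p:ℚ_[p])‖ ^ k * δ := by rw [hε']; ring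
  choose mu hmu using fun i => happrox (v i) (hvk i)
  choose mw hmw using fun i => happrox (w i) (hwk i)
  refine ⟨c, mu, mw, hcne, ?_, ?_⟩ <;>
    · rw [dist_pi_lt_iff hδ]
      intro i
      simpa [Pi.smul_apply, smul_eq_mul] using (by first | exact hmu i | exact hmw i)

end aux

theorem stmt5 (p : ℕ) [Fact p.Prime] (n : ℕ) (hn : 0 < n)
    (Q : QuadraticForm ℚ_[p] (Fin n → ℚ_[p])) :
    Dense (quotSet {y : ℚ_[p] | ∃ v : Fin n → ℤ, Q (fun i => (v i : ℚ_[p])) = y}) ↔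
    quotSet {y : ℚ_[p] | ∃ v : Fin n → ℚ_[p], Q v = y} = Set.univ := by
  set A : Set ℚ_[p] := {y | ∃ v : Fin n → ℤ, Q (fun i => (v i : ℚ_[p])) = y} with hA
  set Bs : Set ℚ_[p] := {y | ∃ v : Fin n → ℚ_[p], Q v = y} with hBs
  have hAB : A ⊆ Bs := by
    rintro y ⟨v, hv⟩
    exact ⟨fun i => (v i : ℚ_[p]), hv⟩
  have hBsq : ∀ a ∈ Bs, ∀ c : ℚ_[p], c ^ 2 * a ∈ Bs := by
    rintro a ⟨v, rfl⟩ c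
    refine ⟨c • v, ?_⟩
    rw [QuadraticMap.map_smul]
    simp [sq, mul_assoc]
  have h2ne : (‖(2 : ℚ_[p])‖ : ℝ) > 0 := norm_pos_iff.mpr two_ne_zero
  constructor
  · intro hD
    ext x
    simp only [Set.mem_univ, iff_true]
    obtain ⟨q0, hq0⟩ := hD.nonempty
    obtain ⟨a0, ha0, b0, hb0, hb0ne, -⟩ := hq0
    by_cases hx : x = 0
    · exact ⟨0, ⟨0, by simp⟩, b0, hAB hb0, hb0ne, by simp [hx]⟩
    · have hε : (0:ℝ) < ‖x‖ * ‖(2:ℚ_[p])‖ ^ 2 := by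
        have := norm_pos_iff.mpr hx; positivity
      obtain ⟨q, hqball, hqA⟩ := (Metric.dense_iff.mp hD) x _ hε
      rw [Metric.mem_ball, dist_eq_norm] at hqball
      obtain ⟨c, hcne, hq⟩ := sq_class x q hx hqball
      obtain ⟨a, ha, b, hb, hbne, rfl⟩ := hqA
      refine ⟨(c⁻¹) ^ 2 * a, hBsq a (hAB ha) c⁻¹, b, hAB hb, hbne, ?_⟩
      rw [div_eq_iff hbne] at hq
      rw [eq_div_iff hbne, hq]
      field_simp
  · intro hU
    have hQc := Q_cont Q
    -- it suffices that every nonzero x is in the closure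
    have main : ∀ x : ℚ_[p], x ≠ 0 → x ∈ closure (quotSet A) := by
      intro x hx
      have hxB : x ∈ quotSet Bs := by rw [hU]; trivial
      obtain ⟨a, ⟨v, rfl⟩, b, ⟨w, rfl⟩, hbne, hxeq⟩ := hxB
      rw [Metric.mem_closure_iff]
      intro ε hε
      -- continuity of the ratio at (v, w)
      have hF : ContinuousAt (fun z : (Fin n → ℚ_[p]) × (Fin n → ℚ_[p]) => Q z.1 / Q z.2)
          (v, w) :=
        ((hQc.comp continuous_fst).continuousAt).div
          ((hQc.comp continuous_snd).continuousAt) (by simpa using hbne)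
      rw [Metric.continuousAt_iff] at hF
      obtain ⟨δ₁, hδ₁, hF⟩ := hF ε hε
      -- radius keeping the denominator nonzero
      have hopen : IsOpen {z : Fin n → ℚ_[p] | Q z ≠ 0} :=
        isOpen_compl_singleton.preimage hQc
      obtain ⟨δ₂, hδ₂, hball⟩ := Metric.isOpen_iff.mp hopen w hbne
      set δ : ℝ := min δ₁ δ₂ with hδdef
      have hδ : 0 < δ := lt_min hδ₁ hδ₂
      obtain ⟨c, u, u', hcne, hu, hu'⟩ := scaled_int_dense v w hδ
      set vu : Fin n → ℚ_[p] := fun i => ((u i : ℚ_[p])) with hvu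
      set wu : Fin n → ℚ_[p] := fun i => ((u' i : ℚ_[p])) with hwu
      have hQw' : Q (c • wu) ≠ 0 := by
        apply hball
        rw [Metric.mem_ball]
        exact lt_of_lt_of_le hu' (min_le_right _ _)
      have hsmul : ∀ z : Fin n → ℚ_[p], Q (c • z) = c ^ 2 * Q z := by
        intro z
        rw [QuadraticMap.map_smul]
        simp [sq, smul_eq_mul, mul_assoc]
      have hQu' : Q wu ≠ 0 := by
        intro h0
        apply hQw'
        rw [hsmul, h0, mul_zero]
      have hdist : dist ((fun z : (Fin n → ℚ_[p]) × (Fin n → ℚ_[p]) => Q z.1 / Q z.2)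
          (c • vu, c • wu)) ((fun z : (Fin n → ℚ_[p]) × (Fin n → ℚ_[p]) => Q z.1 / Q z.2)
          (v, w)) < ε := by
        apply hF
        rw [Prod.dist_eq]
        simp only [max_lt_iff]
        exact ⟨lt_of_lt_of_le hu (min_le_left _ _), lt_of_lt_of_le hu' (min_le_left _ _)⟩
      refine ⟨Q vu / Q wu, ⟨Q vu, ⟨u, rfl⟩, Q wu, ⟨u', rfl⟩, hQu', rfl⟩, ?_⟩
      have heqratio : Q (c • vu) / Q (c • wu) = Q vu / Q wu := by
        rw [hsmul, hsmul, mul_div_mul_left _ _ (pow_ne_zero 2 hcne)]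
      rw [dist_comm]
      simpa [heqratio, ← hxeq] using hdist
    have hdense0 : Dense ({(0 : ℚ_[p])}ᶜ : Set ℚ_[p]) := dense_compl_singleton 0
    rw [dense_iff_closure_eq]
    have h1 : ({(0 : ℚ_[p])}ᶜ : Set ℚ_[p]) ⊆ closure (quotSet A) := fun x hx => main x hx
    have h2 : closure ({(0 : ℚ_[p])}ᶜ : Set ℚ_[p]) ⊆ closure (quotSet A) := by
      rw [← closure_closure (s := quotSet A)]
      exact closure_mono h1
    rw [hdense0.closure_eq] at h2
    exact le_antisymm (Set.subset_univ _) h2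
end

section
/- Let p be an odd prime and Q = aX₁² + bX₁X₂ + cX₂² ∈ ℤ[X₁, X₂] a nonsingular binary quadratic form. Then R(Q(ℤ²)) is dense in ℚ_p if and only if ν_p(b² − 4ac) is even and the Legendre symbol of p^{−ν_p(b²−4ac)}(b² − 4ac) modulo p equals 1. -/
lemma sqrt_eq {r s : ℝ} (hr : 0 ≤ r) (hs : 0 ≤ s) (h : r ^ 2 = s ^ 2) : r = s := by
  have h2 : (r - s) * (r + s) = 0 := by linear_combination h
  rcases mul_eq_zero.1 h2 with h3 | h3
  · linarith
  · rcases eq_or_lt_of_le hr with h4 | h4 <;> rcases eq_or_lt_of_le hs with h5 | h5 <;> linarith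

lemma val_eq_of_norm_eq {p : ℕ} [Fact p.Prime] {z w : ℚ_[p]} (hz : z ≠ 0) (hw : w ≠ 0)
    (h : ‖z‖ = ‖w‖) : z.valuation = w.valuation := by
  rw [Padic.norm_eq_zpow_neg_valuation hz, Padic.norm_eq_zpow_neg_valuation hw] at h
  have hp1 : (1 : ℝ) < (p : ℝ) := by exact_mod_cast (Fact.out : p.Prime).one_lt
  have := zpow_right_injective₀ (by positivity) (ne_of_gt hp1) h
  omega

lemma toZMod_eq_of_norm_lt {p : ℕ} [Fact p.Prime] (z w : ℤ_[p]) (h : ‖z - w‖ < 1) :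
    PadicInt.toZMod z = PadicInt.toZMod w := by
  have : z - w ∈ RingHom.ker (PadicInt.toZMod (p := p)) := by
    rw [PadicInt.ker_toZMod]
    rw [PadicInt.maximalIdeal_eq_span_p, Ideal.mem_span_singleton]
    exact (PadicInt.norm_lt_one_iff_dvd _).1 h
  have h0 : PadicInt.toZMod (z - w) = 0 := this
  rw [map_sub] at h0
  linear_combination h0

lemma psq {p : ℕ} [Fact p.Prime] (hp : p ≠ 2) (u y : ℤ_[p]) (hy : ‖y‖ = 1)
    (h : ‖u - y ^ 2‖ < 1) : ∃ s : ℤ_[p], s ^ 2 = u := by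
  have h2 : ‖(2 : ℤ_[p])‖ = 1 := by
    have hpd : ¬ ((p : ℤ) ∣ 2) := by
      intro hd
      have h1 := Int.le_of_dvd (by norm_num) hd
      have h2 := (Fact.out : p.Prime).two_le
      omega
    have hnl : ¬ (‖((2 : ℤ) : ℤ_[p])‖ < 1) :=
      fun hlt => hpd ((PadicInt.norm_int_lt_one_iff_dvd 2).1 hlt)
    have hle := PadicInt.norm_le_one ((2 : ℤ) : ℤ_[p])
    push_cast at hnl hle
    linarith [lt_or_eq_of_le hle]
  classical
  set F : Polynomial ℤ_[p] := Polynomial.X ^ 2 - Polynomial.C u with hF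
  have heval : ∀ z : ℤ_[p], F.eval z = z ^ 2 - u := by intro z; simp [hF]
  have hderiv : ∀ z : ℤ_[p], F.derivative.eval z = 2 * z := by
    intro z; simp [hF]; left; norm_num
  have hnorm : ‖F.eval y‖ < ‖F.derivative.eval y‖ ^ 2 := by
    rw [heval, hderiv, norm_mul, h2, hy, norm_sub_rev]
    simpa using h
  obtain ⟨z, hz, -⟩ := hensels_lemma hnorm
  rw [Polynomial.coe_aeval_eq_eval, heval] at hz
  exact ⟨z, sub_eq_zero.1 hz⟩

def mkZ {p : ℕ} [Fact p.Prime] (x : ℚ_[p]) (h : ‖x‖ ≤ 1) : ℤ_[p] := ⟨x, h⟩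

@[simp] lemma mkZ_coe {p : ℕ} [Fact p.Prime] (x : ℚ_[p]) (h : ‖x‖ ≤ 1) :
    ((mkZ x h : ℤ_[p]) : ℚ_[p]) = x := rfl

lemma mod_eq_of_close {p : ℕ} [Fact p.Prime] {x y : ℚ_[p]} (hx : ‖x‖ ≤ 1) (hy : ‖y‖ ≤ 1)
    (h : ‖x - y‖ < 1) :
    PadicInt.toZMod (mkZ x hx) = PadicInt.toZMod (mkZ y hy) :=
  toZMod_eq_of_norm_lt _ _ h

lemma toZMod_coe_int {p : ℕ} [Fact p.Prime] (z : ℤ) (h : ‖((z : ℚ_[p]))‖ ≤ 1) :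
    PadicInt.toZMod (mkZ ((z : ℚ_[p])) h) = ((z : ZMod p)) := by
  have h1 : mkZ ((z : ℚ_[p])) h = ((z : ℤ_[p])) := Subtype.ext (by push_cast; rfl)
  rw [h1, map_intCast]

lemma is_sq_mod_of_close {p : ℕ} [Fact p.Prime] {T u : ℚ_[p]} (hT : ‖T‖ ≤ 1) (hu : ‖u‖ ≤ 1)
    (h : ‖T ^ 2 - u‖ < 1) :
    IsSquare (PadicInt.toZMod (mkZ u hu)) := by
  have hT2 : ‖T ^ 2‖ ≤ 1 := by rw [norm_pow]; exact pow_le_one₀ (norm_nonneg _) hT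
  have key : mkZ T hT * mkZ T hT = mkZ (T ^ 2) hT2 := by
    apply Subtype.ext
    rw [PadicInt.coe_mul]
    simp only [mkZ_coe]
    ring
  have h2 := mod_eq_of_close hT2 hu h
  exact ⟨PadicInt.toZMod (mkZ T hT), by rw [← h2, ← key, map_mul]⟩

lemma norm_eq_of_sub_lt {p : ℕ} [Fact p.Prime] {x y : ℚ_[p]} (h : ‖x - y‖ < ‖y‖) :
    ‖x‖ = ‖y‖ := by
  have h1 : x = y + (x - y) := by ring
  rw [h1, Padic.add_eq_max_of_ne (ne_of_gt h), max_eq_left h.le]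

lemma val_zero_of_norm_one {p : ℕ} [Fact p.Prime] {z : ℚ_[p]} (h : ‖z‖ = 1) :
    z.valuation = 0 := by
  have hz : z ≠ 0 := by intro h0; rw [h0, norm_zero] at h; norm_num at h
  have := val_eq_of_norm_eq hz (one_ne_zero) (h.trans norm_one.symm)
  rwa [Padic.valuation_one] at this

lemma norm_int_one {p : ℕ} [Fact p.Prime] {z : ℤ} (h : ¬ ((p:ℤ) ∣ z)) :
    ‖((z : ℚ_[p]))‖ = 1 := by
  rcases lt_or_eq_of_le (Padic.norm_int_le_one (p := p) z) with h1 | h1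
  · exact absurd (Padic.norm_intCast_lt_one_iff.1 h1) h
  · exact h1

lemma int_facts {p : ℕ} [Fact p.Prime] (D : ℤ) (hD : D ≠ 0) :
    D = (p:ℤ) ^ padicValInt p D * (D / (p:ℤ) ^ padicValInt p D) ∧
    ¬ ((p:ℤ) ∣ (D / (p:ℤ) ^ padicValInt p D)) := by
  have hdvd : (p:ℤ) ^ padicValInt p D ∣ D := padicValInt_dvd D
  refine ⟨(Int.ediv_mul_cancel hdvd).symm.trans (mul_comm _ _), ?_⟩
  intro hpd
  have : (p:ℤ) ^ (padicValInt p D + 1) ∣ D := by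
    obtain ⟨e, he⟩ := hpd
    exact ⟨e, by rw [pow_succ, mul_assoc, ← he, Int.mul_ediv_cancel' hdvd]⟩
  rcases (padicValInt_dvd_iff _ _).1 this with h0 | hle
  · exact hD h0
  · omega

lemma sq_iff {p : ℕ} [Fact p.Prime] (hp : p ≠ 2) (D : ℤ) (hD : D ≠ 0) :
    IsSquare ((D : ℚ_[p])) ↔
    Even (padicValInt p D) ∧ legendreSym p (D / (p:ℤ) ^ padicValInt p D) = 1 := by
  set t := padicValInt p D with ht
  set u₀ : ℤ := D / (p:ℤ) ^ t with hu₀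
  obtain ⟨hDe, hnd⟩ := int_facts (p := p) D hD
  rw [← hu₀] at hDe hnd
  have hu0ne : ((u₀ : ZMod p)) ≠ 0 := by
    rw [Ne, ZMod.intCast_zmod_eq_zero_iff_dvd]
    exact_mod_cast hnd
  have hpQ : ((p : ℚ_[p])) ≠ 0 := by
    exact_mod_cast Nat.cast_ne_zero.2 (Fact.out : p.Prime).ne_zero
  constructor
  · rintro ⟨r, hr⟩
    have hD0 : ((D : ℚ_[p])) ≠ 0 := Int.cast_ne_zero.2 hD
    have hr0 : r ≠ 0 := by rintro rfl; rw [mul_zero] at hr; exact hD0 hr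
    set v := r.valuation with hv
    have hvt : ((t : ℤ)) = v + v := by
      have h1 : (D : ℚ_[p]).valuation = (t : ℤ) := by
        rw [Padic.valuation_intCast, ht]
      rw [← h1, hr, Padic.valuation_mul hr0 hr0]
    set s : ℚ_[p] := r / (p : ℚ_[p]) ^ v with hs
    have hpvz : ((p : ℚ_[p])) ^ v ≠ 0 := zpow_ne_zero _ hpQ
    have hs2 : s ^ 2 = (u₀ : ℚ_[p]) := by
      have h1 : s ^ 2 = (r * r) / ((p : ℚ_[p]) ^ v * (p : ℚ_[p]) ^ v) := by
        rw [hs]; ring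
      rw [← hr, ← zpow_add₀ hpQ, ← hvt, zpow_natCast] at h1
      rw [h1, hDe]
      push_cast
      rw [mul_comm, mul_div_assoc, div_self (by exact pow_ne_zero _ hpQ), mul_one]
    have hsn : ‖s‖ = 1 := by
      rw [hs, norm_div, Padic.norm_eq_zpow_neg_valuation hr0, Padic.norm_p_zpow]
      have hppos : (0:ℝ) < (p:ℝ) := Nat.cast_pos.2 (Fact.out : p.Prime).pos
      exact div_self (ne_of_gt (zpow_pos hppos _))
    set S : ℤ_[p] := ⟨s, le_of_eq hsn⟩ with hS
    have hS2 : S ^ 2 = ((u₀ : ℤ_[p])) := by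
      apply Subtype.ext
      push_cast [hS]
      exact hs2
    constructor
    · have he : Even ((t : ℤ)) := ⟨v, hvt⟩
      exact (Int.even_coe_nat t).1 he
    · rw [legendreSym.eq_one_iff p hu0ne]
      exact ⟨PadicInt.toZMod S, by rw [← map_intCast (PadicInt.toZMod (p := p)) u₀, ← hS2, map_pow]; ring⟩
  · rintro ⟨ht2, hl⟩
    obtain ⟨s', hs'⟩ := ht2
    have hu0sq : IsSquare ((u₀ : ZMod p)) := (legendreSym.eq_one_iff p hu0ne).1 hl
    obtain ⟨x, hx⟩ := hu0sq
    have hx0 : x ≠ 0 := by rintro rfl; rw [mul_zero] at hx; exact hu0ne hx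
    set n : ℕ := x.val with hn
    have hnx : ((n : ZMod p)) = x := ZMod.natCast_rightInverse x
    have hdv : (p : ℤ) ∣ (u₀ - (n:ℤ)^2) := by
      rw [← ZMod.intCast_zmod_eq_zero_iff_dvd]
      push_cast
      rw [hnx, hx]
      ring
    have hnear : ‖((u₀ : ℤ_[p])) - ((n : ℤ) : ℤ_[p]) ^ 2‖ < 1 := by
      have : ((u₀ : ℤ_[p])) - ((n : ℤ) : ℤ_[p]) ^ 2 = (((u₀ - (n:ℤ)^2 : ℤ)) : ℤ_[p]) := by push_cast; ring
      rw [this, PadicInt.norm_int_lt_one_iff_dvd]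
      exact hdv
    have hny : ‖((n : ℤ) : ℤ_[p])‖ = 1 := by
      have hnd2 : ¬ ((p:ℤ) ∣ (n:ℤ)) := by
        rw [Int.natCast_dvd_natCast]
        intro hdd
        apply hx0
        rw [← hnx, ZMod.natCast_eq_zero_iff]
        exact hdd
      have h1 : ¬ ‖((n : ℤ) : ℤ_[p])‖ < 1 := fun hlt => hnd2 ((PadicInt.norm_int_lt_one_iff_dvd _).1 hlt)
      have h2 := PadicInt.norm_le_one (((n : ℤ)) : ℤ_[p])
      rcases lt_or_eq_of_le h2 with h3 | h3
      · exact absurd h3 h1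
      · exact h3
    obtain ⟨s, hsq⟩ := psq hp ((u₀ : ℤ_[p])) _ hny hnear
    refine ⟨(p : ℚ_[p]) ^ s' * (s : ℚ_[p]), ?_⟩
    have hcast : ((s : ℚ_[p])) ^ 2 = ((u₀ : ℚ_[p])) := by
      have := congrArg (fun z : ℤ_[p] => (z : ℚ_[p])) hsq
      push_cast at this
      exact this
    calc ((D : ℚ_[p])) = (p : ℚ_[p]) ^ t * (u₀ : ℚ_[p]) := by rw [hDe]; push_cast; ring
    _ = (p : ℚ_[p]) ^ (s' + s') * ((s : ℚ_[p])) ^ 2 := by rw [← hs', hcast]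
    _ = (p : ℚ_[p]) ^ s' * (s : ℚ_[p]) * ((p : ℚ_[p]) ^ s' * (s : ℚ_[p])) := by rw [pow_add]; ring

lemma quot_norm {p : ℕ} [Fact p.Prime] (a b c : ℤ) (hA : ((a:ℚ_[p])) ≠ 0) {q : ℚ_[p]}
    (hq : q ∈ quotSet {y : ℚ_[p] | ∃ m k : ℤ, ((a*m^2+b*m*k+c*k^2 : ℤ):ℚ_[p]) = y}) :
    ∃ x y : ℚ_[p], q = x^2 - ((b^2-4*a*c : ℤ) : ℚ_[p]) * y^2 := by
  obtain ⟨s, hs, d, hd, hdne, rfl⟩ := hq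
  obtain ⟨m, k, hs⟩ := hs
  obtain ⟨m', k', hd'⟩ := hd
  subst hs; subst hd'
  set E : ℚ_[p] := ((4*a*(a*m'^2+b*m'*k'+c*k'^2) : ℤ) : ℚ_[p]) with hE
  have hd0 : ((a*m'^2+b*m'*k'+c*k'^2 : ℤ) : ℚ_[p]) ≠ 0 := hdne
  have hE0 : E ≠ 0 := by
    rw [hE]
    push_cast
    push_cast at hd0 hA
    exact mul_ne_zero (mul_ne_zero (by norm_num) hA) hd0
  refine ⟨(((2*a*m+b*k)*(2*a*m'+b*k') + (b^2-4*a*c)*(k*k') : ℤ) : ℚ_[p]) / E,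
         (((2*a*m+b*k)*k' + k*(2*a*m'+b*k') : ℤ) : ℚ_[p]) / E, ?_⟩
  rw [div_pow, div_pow, mul_div_assoc', div_sub_div_same, div_eq_div_iff hdne (pow_ne_zero 2 hE0)]
  rw [hE]
  push_cast
  ring

lemma sqrt_one_add {p : ℕ} [Fact p.Prime] (hp : p ≠ 2) (x : ℚ_[p]) (h : ‖x‖ < 1) :
    ∃ y : ℚ_[p], y ^ 2 = 1 + x ∧ ‖y - 1‖ ≤ 1 := by
  have hle : ‖(1 : ℚ_[p]) + x‖ ≤ 1 := by
    refine le_trans (Padic.nonarchimedean _ _) (max_le ?_ h.le)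
    rw [norm_one]
  have h1 : ‖(1 : ℤ_[p])‖ = 1 := norm_one
  have hnear : ‖mkZ (1 + x) hle - 1 ^ 2‖ < 1 := by
    have h2 : ((mkZ (1 + x) hle - 1 ^ 2 : ℤ_[p]) : ℚ_[p]) = x := by
      push_cast
      rw [mkZ_coe]
      ring
    rw [PadicInt.norm_def, h2]
    exact h
  obtain ⟨s, hs⟩ := psq hp (mkZ (1 + x) hle) 1 h1 hnear
  refine ⟨(s : ℚ_[p]), ?_, ?_⟩
  · have h3 := congrArg (fun z : ℤ_[p] => (z : ℚ_[p])) hs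
    push_cast at h3
    rw [mkZ_coe] at h3
    exact h3
  · rw [sub_eq_add_neg]
    refine le_trans (Padic.nonarchimedean _ _) (max_le ?_ ?_)
    · rw [PadicInt.padic_norm_e_of_padicInt]
      exact PadicInt.norm_le_one s
    · rw [norm_neg, norm_one]

lemma cast_int_approx {p : ℕ} [Fact p.Prime] (z : ℚ_[p]) (hz : ‖z‖ ≤ 1) {ε : ℝ} (hε : 0 < ε) :
    ∃ m : ℤ, ‖z - ((m : ℚ_[p]))‖ < ε := by
  obtain ⟨m, hm⟩ := PadicInt.denseRange_intCast.exists_dist_lt (mkZ z hz) hε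
  refine ⟨m, ?_⟩
  rw [dist_eq_norm] at hm
  have h2 : ((mkZ z hz - (m : ℤ_[p]) : ℤ_[p]) : ℚ_[p]) = z - ((m : ℚ_[p])) := by
    push_cast
    rw [mkZ_coe]
  rw [PadicInt.norm_def, h2] at hm
  exact hm

lemma value_approx {p : ℕ} [Fact p.Prime] (hp : p ≠ 2) (a b c : ℤ) (r : ℚ_[p])
    (hr2 : r ^ 2 = ((b ^ 2 - 4 * a * c : ℤ) : ℚ_[p])) (hr0 : r ≠ 0)
    (hA : ((a : ℚ_[p])) ≠ 0) :
    ∃ ρ : ℝ, 0 < ρ ∧ ∀ z : ℚ_[p], ‖z‖ < ρ → ∀ ε : ℝ, 0 < ε →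
      ∃ m k : ℤ, ‖((a * m ^ 2 + b * m * k + c * k ^ 2 : ℤ) : ℚ_[p]) - z‖ < ε := by
  set A : ℚ_[p] := ((a : ℚ_[p])) with hAdef
  set B : ℚ_[p] := ((b : ℚ_[p])) with hBdef
  set C : ℚ_[p] := ((c : ℚ_[p])) with hCdef
  have h2 : (2 : ℚ_[p]) ≠ 0 := two_ne_zero
  have h2A : 2 * A ≠ 0 := mul_ne_zero h2 hA
  have h4A : 4 * A ≠ 0 := mul_ne_zero (by norm_num) hA
  set α : ℚ_[p] := (r - B) / (2 * A) with hαdef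
  have hppos : (0 : ℝ) < ‖(2 * A : ℚ_[p])‖ := norm_pos_iff.2 h2A
  obtain ⟨j, hj⟩ := exists_pow_lt_of_lt_one
    (show (0:ℝ) < min (1 / (‖α‖ + 1)) (‖(2*A : ℚ_[p])‖ / (‖r‖ + 1)) by
      apply lt_min
      · positivity
      · positivity)
    (Padic.norm_p_lt_one (p := p))
  set πQ : ℚ_[p] := (p : ℚ_[p]) ^ j with hπdef
  have hπnorm : ‖πQ‖ = ‖(p : ℚ_[p])‖ ^ j := by rw [hπdef, norm_pow]
  have hπle1 : ‖πQ‖ ≤ 1 := by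
    rw [hπnorm]
    exact pow_le_one₀ (norm_nonneg _) (Padic.norm_p_lt_one).le
  have hπ0 : πQ ≠ 0 := by
    apply pow_ne_zero
    exact_mod_cast Nat.cast_ne_zero.2 (Fact.out : p.Prime).ne_zero
  have hαπ : ‖α * πQ‖ ≤ 1 := by
    rw [norm_mul, hπnorm]
    have h1 : ‖(p:ℚ_[p])‖ ^ j < 1 / (‖α‖ + 1) := lt_of_lt_of_le hj (min_le_left _ _)
    have h3 : ‖α‖ * ‖(p:ℚ_[p])‖ ^ j ≤ (‖α‖ + 1) * ‖(p:ℚ_[p])‖ ^ j := by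
      apply mul_le_mul_of_nonneg_right (by linarith) (by positivity)
    have h4 : (‖α‖ + 1) * ‖(p:ℚ_[p])‖ ^ j < (‖α‖ + 1) * (1 / (‖α‖ + 1)) := by
      apply mul_lt_mul_of_pos_left h1 (by positivity)
    rw [mul_one_div, div_self (by positivity)] at h4
    linarith
  have hrπ : ‖r * πQ‖ ≤ ‖(2 * A : ℚ_[p])‖ := by
    rw [norm_mul, hπnorm]
    have h1 : ‖(p:ℚ_[p])‖ ^ j < ‖(2*A : ℚ_[p])‖ / (‖r‖ + 1) := lt_of_lt_of_le hj (min_le_right _ _)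
    have h3 : ‖r‖ * ‖(p:ℚ_[p])‖ ^ j ≤ (‖r‖ + 1) * ‖(p:ℚ_[p])‖ ^ j := by
      apply mul_le_mul_of_nonneg_right (by linarith) (by positivity)
    have h4 : (‖r‖ + 1) * ‖(p:ℚ_[p])‖ ^ j < (‖r‖ + 1) * (‖(2*A : ℚ_[p])‖ / (‖r‖ + 1)) := by
      apply mul_lt_mul_of_pos_left h1 (by positivity)
    have h5 : (‖r‖ + 1) * (‖(2*A : ℚ_[p])‖ / (‖r‖ + 1)) = ‖(2*A : ℚ_[p])‖ := by
      field_simp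
    linarith
  set w : ℚ_[p] := r ^ 2 * πQ ^ 2 / (4 * A) with hwdef
  have hw0 : w ≠ 0 := by
    apply div_ne_zero (mul_ne_zero (pow_ne_zero _ hr0) (pow_ne_zero _ hπ0)) h4A
  refine ⟨‖w‖, norm_pos_iff.2 hw0, ?_⟩
  intro z hz ε hε
  set x : ℚ_[p] := z / w with hxdef
  have hx1 : ‖x‖ < 1 := by
    rw [hxdef, norm_div]
    rw [div_lt_one (norm_pos_iff.2 hw0)]
    exact hz
  obtain ⟨y, hy2, hy1⟩ := sqrt_one_add hp x hx1
  set δ : ℚ_[p] := (r * πQ / (2 * A)) * (y - 1) with hδdef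
  have hδ1 : ‖δ‖ ≤ 1 := by
    rw [hδdef, norm_mul, norm_div]
    have := div_le_one_of_le₀ hrπ (norm_nonneg _)
    calc ‖r * πQ‖ / ‖(2*A : ℚ_[p])‖ * ‖y - 1‖ ≤ 1 * 1 := by
          apply mul_le_mul this hy1 (norm_nonneg _) zero_le_one
    _ = 1 := by norm_num
  set x₀ : ℚ_[p] := α * πQ + δ with hx₀def
  have hx₀1 : ‖x₀‖ ≤ 1 := by
    rw [hx₀def]
    exact le_trans (Padic.nonarchimedean _ _) (max_le hαπ hδ1)
  -- key algebraic identity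
  have hr2' : r ^ 2 = B ^ 2 - 4 * A * C := by
    rw [hr2, hAdef, hBdef, hCdef]
    push_cast
    ring
  have hy2' : r ^ 2 * πQ ^ 2 * y ^ 2 = r ^ 2 * πQ ^ 2 + 4 * A * z := by
    rw [hy2, hxdef, hwdef]
    field_simp
  have hx₀form : x₀ * (2 * A) = πQ * (r * y - B) := by
    rw [hx₀def, hδdef, hαdef]
    field_simp
    ring
  have heq : A * x₀ ^ 2 + B * (x₀ * πQ) + C * πQ ^ 2 = z := by
    have h4A2 : (4 * A ^ 2 : ℚ_[p]) ≠ 0 := mul_ne_zero (by norm_num) (pow_ne_zero _ hA)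
    apply mul_left_cancel₀ h4A2
    linear_combination (A * (2 * A * x₀ + πQ * (r * y - B)) + 2 * A * B * πQ) * hx₀form
      + A * hy2' + A * πQ ^ 2 * hr2'
  obtain ⟨m, hm⟩ := cast_int_approx x₀ hx₀1 hε
  refine ⟨m, p ^ j, ?_⟩
  have hcast : ((a * m ^ 2 + b * m * (p ^ j : ℤ) + c * (p ^ j : ℤ) ^ 2 : ℤ) : ℚ_[p])
      = A * ((m : ℚ_[p])) ^ 2 + B * (((m : ℚ_[p])) * πQ) + C * πQ ^ 2 := by
    rw [hAdef, hBdef, hCdef, hπdef]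
    push_cast
    ring
  have hfact : ((a * m ^ 2 + b * m * (p ^ j : ℤ) + c * (p ^ j : ℤ) ^ 2 : ℤ) : ℚ_[p]) - z
      = (((m : ℚ_[p])) - x₀) * (A * (((m : ℚ_[p])) + x₀) + B * πQ) := by
    rw [hcast, ← heq]
    ring
  rw [hfact, norm_mul]
  have hf2 : ‖A * (((m : ℚ_[p])) + x₀) + B * πQ‖ ≤ 1 := by
    refine le_trans (Padic.nonarchimedean _ _) (max_le ?_ ?_)
    · rw [norm_mul]
      have hAle : ‖A‖ ≤ 1 := Padic.norm_int_le_one a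
      have hsum : ‖((m : ℚ_[p])) + x₀‖ ≤ 1 :=
        le_trans (Padic.nonarchimedean _ _)
          (max_le (Padic.norm_int_le_one m) hx₀1)
      calc ‖A‖ * ‖(m : ℚ_[p]) + x₀‖ ≤ 1 * 1 :=
            mul_le_mul hAle hsum (norm_nonneg _) zero_le_one
      _ = 1 := by norm_num
    · rw [norm_mul]
      calc ‖B‖ * ‖πQ‖ ≤ 1 * 1 :=
            mul_le_mul (Padic.norm_int_le_one b) hπle1 (norm_nonneg _) zero_le_one
      _ = 1 := by norm_num
  calc ‖(m : ℚ_[p]) - x₀‖ * ‖A * ((m : ℚ_[p]) + x₀) + B * πQ‖ ≤ ‖(m : ℚ_[p]) - x₀‖ * 1 :=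
        mul_le_mul_of_nonneg_left hf2 (norm_nonneg _)
  _ = ‖x₀ - (m : ℚ_[p])‖ := by rw [mul_one, norm_sub_rev]
  _ < ε := hm

lemma dense_of_sq {p : ℕ} [Fact p.Prime] (hp : p ≠ 2) (a b c : ℤ)
    (hns : b ^ 2 - 4 * a * c ≠ 0)
    (hsq : IsSquare (((b ^ 2 - 4 * a * c : ℤ) : ℚ_[p]))) :
    Dense (quotSet {y : ℚ_[p] | ∃ m k : ℤ,
      ((a * m ^ 2 + b * m * k + c * k ^ 2 : ℤ) : ℚ_[p]) = y}) := by
  rw [Metric.dense_iff]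
  intro T rad hrad
  by_cases ha : a = 0
  · -- rational density
    have hb : b ≠ 0 := by
      intro hb0
      apply hns
      rw [ha, hb0]
      ring
    obtain ⟨q, hq⟩ := Padic.rat_dense (p := p) T hrad
    refine ⟨(q : ℚ_[p]), Metric.mem_ball.2 ?_, ?_⟩
    · rw [dist_eq_norm, norm_sub_rev]
      exact hq
    · refine ⟨((b ^ 2 * q.num : ℤ) : ℚ_[p]), ⟨q.num - c, b, by rw [ha]; push_cast; ring⟩,
        ((b ^ 2 * (q.den : ℤ) : ℤ) : ℚ_[p]), ⟨(q.den : ℤ) - c, b, by rw [ha]; push_cast; ring⟩,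
        ?_, ?_⟩
      · rw [Ne, Int.cast_eq_zero]
        refine mul_ne_zero (pow_ne_zero _ hb) ?_
        exact_mod_cast q.den_nz
      · push_cast
        rw [Rat.cast_def]
        rw [mul_div_mul_left _ _ (pow_ne_zero 2 ((Int.cast_ne_zero (α := ℚ_[p])).2 hb))]
  · -- main case
    obtain ⟨r, hrr⟩ := hsq
    have hr2 : r ^ 2 = ((b ^ 2 - 4 * a * c : ℤ) : ℚ_[p]) := by rw [sq]; exact hrr.symm
    have hDC : ((b ^ 2 - 4 * a * c : ℤ) : ℚ_[p]) ≠ 0 := Int.cast_ne_zero.2 hns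
    have hr0 : r ≠ 0 := by
      intro h0
      rw [h0] at hr2
      exact hDC (by rw [← hr2]; norm_num)
    have hA : ((a : ℚ_[p])) ≠ 0 := Int.cast_ne_zero.2 ha
    obtain ⟨ρ, hρ, happ⟩ := value_approx hp a b c r hr2 hr0 hA
    have hTpos : (0:ℝ) < ‖T‖ + 1 := by positivity
    obtain ⟨n, hn⟩ := exists_pow_lt_of_lt_one (div_pos hρ hTpos)
      (Padic.norm_p_lt_one (p := p))
    set z₀ : ℚ_[p] := (p : ℚ_[p]) ^ n with hz₀def
    have hz₀norm : ‖z₀‖ = ‖(p : ℚ_[p])‖ ^ n := by rw [hz₀def, norm_pow]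
    have hpQ : ((p : ℚ_[p])) ≠ 0 := by
      exact_mod_cast Nat.cast_ne_zero.2 (Fact.out : p.Prime).ne_zero
    have hz₀0 : z₀ ≠ 0 := pow_ne_zero _ hpQ
    have hz₀pos : (0:ℝ) < ‖z₀‖ := norm_pos_iff.2 hz₀0
    have hz₀lt : ‖z₀‖ < ρ / (‖T‖ + 1) := by rw [hz₀norm]; exact hn
    have hz₀ρ : ‖z₀‖ < ρ := lt_of_lt_of_le hz₀lt (div_le_self hρ.le (by linarith [norm_nonneg T]))
    obtain ⟨m', k', hd⟩ := happ z₀ hz₀ρ ‖z₀‖ hz₀pos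
    set d : ℚ_[p] := ((a * m' ^ 2 + b * m' * k' + c * k' ^ 2 : ℤ) : ℚ_[p]) with hddef
    have hdn : ‖d‖ = ‖z₀‖ := norm_eq_of_sub_lt hd
    have hd0 : d ≠ 0 := by
      intro h0
      rw [h0, norm_zero] at hdn
      exact absurd hdn.symm (ne_of_gt hz₀pos)
    have hdpos : (0:ℝ) < ‖d‖ := norm_pos_iff.2 hd0
    have hTd : ‖T * d‖ < ρ := by
      rw [norm_mul, hdn]
      calc ‖T‖ * ‖z₀‖ ≤ (‖T‖ + 1) * ‖z₀‖ :=
            mul_le_mul_of_nonneg_right (by linarith) hz₀pos.le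
      _ < (‖T‖ + 1) * (ρ / (‖T‖ + 1)) := mul_lt_mul_of_pos_left hz₀lt hTpos
      _ = ρ := by field_simp
    obtain ⟨m, k, hs⟩ := happ (T * d) hTd (rad * ‖d‖) (mul_pos hrad hdpos)
    set s : ℚ_[p] := ((a * m ^ 2 + b * m * k + c * k ^ 2 : ℤ) : ℚ_[p]) with hsdef
    refine ⟨s / d, Metric.mem_ball.2 ?_, ⟨s, ⟨m, k, rfl⟩, d, ⟨m', k', rfl⟩, hd0, rfl⟩⟩
    rw [dist_eq_norm]
    have hdiv : s / d - T = (s - T * d) / d := by field_simp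
    rw [hdiv, norm_div, div_lt_iff₀ hdpos]
    exact hs

lemma not_dense {p : ℕ} [Fact p.Prime] (hp : p ≠ 2) (a b c : ℤ) (hns : b^2 - 4*a*c ≠ 0)
    (hnsq : ¬ IsSquare (((b^2 - 4*a*c : ℤ) : ℚ_[p]))) :
    ¬ Dense (quotSet {y : ℚ_[p] | ∃ m k : ℤ, ((a*m^2+b*m*k+c*k^2 : ℤ):ℚ_[p]) = y}) := by
  intro hdense
  have ha : a ≠ 0 := by
    rintro rfl
    exact hnsq ⟨((b : ℚ_[p])), by push_cast; ring⟩
  have hA : ((a : ℚ_[p])) ≠ 0 := Int.cast_ne_zero.2 ha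
  obtain ⟨hDe, hnd⟩ := int_facts (p := p) (b^2 - 4*a*c) hns
  have hrhs := (sq_iff hp (b^2 - 4*a*c) hns).not.1 hnsq
  set D : ℤ := b^2 - 4*a*c with hDdef
  set t : ℕ := padicValInt p D with htdef
  set u₀ : ℤ := D / (p:ℤ)^t with hu₀def
  have hu0ne : ((u₀ : ZMod p)) ≠ 0 := by
    rw [Ne, ZMod.intCast_zmod_eq_zero_iff_dvd]; exact hnd
  have hu0n : ‖((u₀ : ℚ_[p]))‖ = 1 := norm_int_one hnd
  have hu0z : ((u₀ : ℚ_[p])) ≠ 0 := by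
    intro h0; rw [h0, norm_zero] at hu0n; norm_num at hu0n
  have hDcQ : ((D : ℚ_[p])) ≠ 0 := Int.cast_ne_zero.2 hns
  have hvalD : ((D : ℚ_[p])).valuation = (t : ℤ) := by
    rw [Padic.valuation_intCast, htdef]
  rw [Metric.dense_iff] at hdense
  by_cases hev : Even t
  · -- even case: center p, radius ‖p‖
    have hnl : ¬ IsSquare ((u₀ : ZMod p)) := by
      intro hsq
      exact hrhs ⟨hev, (legendreSym.eq_one_iff p hu0ne).2 hsq⟩
    obtain ⟨s', hs'⟩ := hev
    have hpr : (0:ℝ) < (p:ℝ)⁻¹ := by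
      have : (0:ℝ) < (p:ℝ) := Nat.cast_pos.2 (Fact.out : p.Prime).pos
      positivity
    obtain ⟨q, hqball, hqmem⟩ := hdense ((p : ℚ_[p])) _ hpr
    rw [Metric.mem_ball, dist_eq_norm] at hqball
    rw [← Padic.norm_p (p := p)] at hqball
    have hq1 : ‖q‖ = ‖((p : ℚ_[p]))‖ := norm_eq_of_sub_lt hqball
    have hpQ : ((p : ℚ_[p])) ≠ 0 := by
      exact_mod_cast Nat.cast_ne_zero.2 (Fact.out : p.Prime).ne_zero
    have hq0 : q ≠ 0 := by
      intro h0; rw [h0, norm_zero] at hq1; exact hpQ (by rwa [eq_comm, norm_eq_zero] at hq1)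
    have hqval : q.valuation = 1 := by
      rw [val_eq_of_norm_eq hq0 hpQ hq1, Padic.valuation_p]
    obtain ⟨x, y, hxy⟩ := quot_norm a b c hA hqmem
    rw [← hDdef] at hxy
    set Y : ℚ_[p] := (p : ℚ_[p]) ^ s' * y with hY
    have hq' : q = x^2 - (u₀ : ℚ_[p]) * Y^2 := by
      rw [hxy, hY]
      have : ((D : ℚ_[p])) = ((p : ℚ_[p]) ^ s')^2 * (u₀ : ℚ_[p]) := by
        rw [hDe, hs']; push_cast; ring
      rw [this]; ring
    by_cases hxY : ‖x‖ = ‖Y‖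
    · have hY0 : Y ≠ 0 := by
        intro h0
        rw [h0, norm_zero] at hxY
        apply hq0
        rw [hq', h0, norm_eq_zero.1 hxY]
        ring
      have hx0 : x ≠ 0 := by
        intro h0; rw [h0, norm_zero, eq_comm, norm_eq_zero] at hxY; exact hY0 hxY
      set T : ℚ_[p] := x / Y with hT
      have hT1 : ‖T‖ = 1 := by
        rw [hT, norm_div, ← hxY, div_self (norm_ne_zero_iff.2 hx0)]
      have hqq : q = Y^2 * (T^2 - (u₀ : ℚ_[p])) := by
        rw [hq', hT]; field_simp
      have hTu1 : ‖T^2 - (u₀ : ℚ_[p])‖ = 1 := by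
        have hle : ‖T^2 - (u₀ : ℚ_[p])‖ ≤ 1 := by
          rw [sub_eq_add_neg]
          refine le_trans (Padic.nonarchimedean _ _) (max_le ?_ ?_)
          · rw [norm_pow, hT1]; norm_num
          · rw [norm_neg, hu0n]
        rcases lt_or_eq_of_le hle with hlt | heq
        · exfalso
          apply hnl
          have hsq := is_sq_mod_of_close (le_of_eq hT1) (le_of_eq hu0n) hlt
          rwa [toZMod_coe_int] at hsq
        · exact heq
      have hTu0 : T^2 - (u₀ : ℚ_[p]) ≠ 0 := by
        intro h0; rw [h0, norm_zero] at hTu1; norm_num at hTu1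
      have : q.valuation = Y.valuation + Y.valuation + 0 := by
        rw [hqq, Padic.valuation_mul (pow_ne_zero 2 hY0) hTu0]
        rw [sq, Padic.valuation_mul hY0 hY0, val_zero_of_norm_one hTu1]
      omega
    · -- different norms
      have hne2 : ‖x^2‖ ≠ ‖-((u₀:ℚ_[p]) * Y^2)‖ := by
        rw [norm_neg, norm_mul, hu0n, one_mul, norm_pow, norm_pow]
        intro h; exact hxY (sqrt_eq (norm_nonneg x) (norm_nonneg Y) h)
      have hmax : ‖q‖ = max ‖x^2‖ ‖-((u₀:ℚ_[p]) * Y^2)‖ := by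
        rw [hq', sub_eq_add_neg]
        exact Padic.add_eq_max_of_ne hne2
      rcases max_cases ‖x^2‖ ‖-((u₀:ℚ_[p]) * Y^2)‖ with ⟨hm, _⟩ | ⟨hm, _⟩
      · rw [hm] at hmax
        have hx0 : x ≠ 0 := by
          intro h0; rw [h0] at hmax; simp at hmax; exact hq0 hmax
        have : q.valuation = x.valuation + x.valuation := by
          rw [val_eq_of_norm_eq hq0 (pow_ne_zero 2 hx0) hmax, sq,
            Padic.valuation_mul hx0 hx0]
        omega
      · rw [hm] at hmax
        have hY0 : Y ≠ 0 := by
          intro h0; rw [h0] at hmax; simp at hmax; exact hq0 hmax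
        have hprod0 : ((u₀:ℚ_[p]) * Y^2) ≠ 0 := mul_ne_zero hu0z (pow_ne_zero 2 hY0)
        rw [norm_neg] at hmax
        have : q.valuation = 0 + (Y.valuation + Y.valuation) := by
          rw [val_eq_of_norm_eq hq0 hprod0 hmax,
            Padic.valuation_mul hu0z (pow_ne_zero 2 hY0), sq,
            Padic.valuation_mul hY0 hY0, val_zero_of_norm_one hu0n]
        omega
  · -- odd case: center nonresidue n, radius 1
    obtain ⟨w, hw⟩ := FiniteField.exists_nonsquare
      (F := ZMod p) (by rw [ZMod.ringChar_zmod_n]; exact hp)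
    have hw0 : w ≠ 0 := by rintro rfl; exact hw ⟨0, by ring⟩
    set n : ℕ := w.val with hn
    have hnw : ((n : ZMod p)) = w := ZMod.natCast_rightInverse w
    have hpn : ¬ ((p:ℤ) ∣ (n:ℤ)) := by
      rw [Int.natCast_dvd_natCast]
      intro hdd
      exact hw0 (by rw [← hnw, ZMod.natCast_eq_zero_iff]; exact hdd)
    have hn1 : ‖(((n:ℤ) : ℚ_[p]))‖ = 1 := norm_int_one hpn
    obtain ⟨q, hqball, hqmem⟩ := hdense (((n:ℤ) : ℚ_[p])) 1 one_pos
    rw [Metric.mem_ball, dist_eq_norm] at hqball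
    have hq1 : ‖q‖ = 1 := by
      rw [← hn1] at hqball ⊢
      exact norm_eq_of_sub_lt hqball
    have hq0 : q ≠ 0 := by intro h0; rw [h0, norm_zero] at hq1; norm_num at hq1
    have hqval : q.valuation = 0 := val_zero_of_norm_one hq1
    obtain ⟨x, y, hxy⟩ := quot_norm a b c hA hqmem
    rw [← hDdef] at hxy
    have hoddZ : ∀ v : ℤ, ((t:ℤ)) ≠ 2 * v := by
      intro v hv
      exact hev (by
        have : Even ((t:ℤ)) := ⟨v, by omega⟩
        exact_mod_cast (Int.even_coe_nat t).1 this)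
    by_cases hcmp : ‖x^2‖ = ‖((D:ℚ_[p])) * y^2‖
    · have hx0 : x ≠ 0 := by
        intro h0
        rw [h0] at hcmp
        have hD0' : ((D:ℚ_[p])) * y^2 = 0 := by
          rw [← norm_eq_zero, ← hcmp]
          simp
        apply hq0
        rw [hxy, h0, hD0']
        simp
      have hy0 : y ≠ 0 := by
        intro h0
        rw [h0] at hcmp
        have hx00 : x = 0 := by
          rw [← norm_eq_zero]
          have h1 : ‖x^2‖ = 0 := by rw [hcmp]; simp
          rw [norm_pow] at h1
          nlinarith [norm_nonneg x]
        exact hx0 hx00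
      have := val_eq_of_norm_eq (pow_ne_zero 2 hx0) (mul_ne_zero hDcQ (pow_ne_zero 2 hy0)) hcmp
      rw [sq, Padic.valuation_mul hx0 hx0,
        Padic.valuation_mul hDcQ (pow_ne_zero 2 hy0), sq,
        Padic.valuation_mul hy0 hy0, hvalD] at this
      exact hoddZ (x.valuation - y.valuation) (by omega)
    · have hne2 : ‖x^2‖ ≠ ‖-(((D:ℚ_[p])) * y^2)‖ := by rwa [norm_neg]
      have hmax : ‖q‖ = max ‖x^2‖ ‖-(((D:ℚ_[p])) * y^2)‖ := by
        rw [hxy, sub_eq_add_neg]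
        exact Padic.add_eq_max_of_ne hne2
      rcases max_cases ‖x^2‖ ‖-(((D:ℚ_[p])) * y^2)‖ with ⟨hm, hgt⟩ | ⟨hm, hgt⟩
      · -- ‖q‖ = ‖x²‖ = 1, and ‖Dy²‖ < 1 (strict since ne)
        rw [hm] at hmax
        have hx2 : ‖x^2‖ = 1 := by rw [← hmax, hq1]
        have hxn : ‖x‖ = 1 := by
          rw [norm_pow] at hx2
          exact sqrt_eq (norm_nonneg x) zero_le_one (by rw [hx2]; norm_num)
        have hDy : ‖((D:ℚ_[p])) * y^2‖ < 1 := by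
          rcases lt_or_eq_of_le hgt with h1 | h1
          · rw [norm_neg] at h1; rwa [hx2] at h1
          · exact absurd h1.symm hne2
        -- q ≡ x² mod p and q ≡ n mod p
        have hxle2 : ‖x‖ ≤ 1 := le_of_eq hxn
        have hnle : ‖(((n:ℤ)) : ℚ_[p])‖ ≤ 1 := le_of_eq hn1
        have hqx : ‖x^2 - (((n:ℤ)) : ℚ_[p])‖ < 1 := by
          have hrep : x^2 - (((n:ℤ)) : ℚ_[p]) = (x^2 - q) + (q - (((n:ℤ)) : ℚ_[p])) := by ring
          rw [hrep]
          refine lt_of_le_of_lt (Padic.nonarchimedean _ _) (max_lt ?_ hqball)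
          have hxq : x^2 - q = ((D:ℚ_[p])) * y^2 := by rw [hxy]; ring
          rw [hxq]
          exact hDy
        apply hw
        have hsq := is_sq_mod_of_close hxle2 hnle hqx
        rw [toZMod_coe_int] at hsq
        rwa [Int.cast_natCast, hnw] at hsq
      · rw [hm, norm_neg] at hmax
        have hy0 : y ≠ 0 := by
          intro h0; rw [h0] at hmax; simp at hmax
          rw [hmax, norm_zero] at hq1; norm_num at hq1
        have hprod0 : ((D:ℚ_[p])) * y^2 ≠ 0 := mul_ne_zero hDcQ (pow_ne_zero 2 hy0)
        have := val_eq_of_norm_eq hq0 hprod0 hmax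
        rw [Padic.valuation_mul hDcQ (pow_ne_zero 2 hy0), sq,
          Padic.valuation_mul hy0 hy0, hvalD] at this
        exact hoddZ (-y.valuation) (by omega)

theorem stmt14 (p : ℕ) [Fact p.Prime] (hp : p ≠ 2) (a b c : ℤ)
    (hns : b ^ 2 - 4 * a * c ≠ 0) :
    Dense (quotSet {y : ℚ_[p] | ∃ m k : ℤ,
        ((a * m ^ 2 + b * m * k + c * k ^ 2 : ℤ) : ℚ_[p]) = y}) ↔
    Even (padicValInt p (b ^ 2 - 4 * a * c)) ∧
      legendreSym p ((b ^ 2 - 4 * a * c) / (p : ℤ) ^ padicValInt p (b ^ 2 - 4 * a * c)) = 1 := by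
  constructor
  · intro hd
    rw [← sq_iff hp (b ^ 2 - 4 * a * c) hns]
    by_contra hn
    exact not_dense hp a b c hns hn hd
  · intro hr
    exact dense_of_sq hp a b c hns ((sq_iff hp (b ^ 2 - 4 * a * c) hns).2 hr)
end

section
/- Let Q = aX₁² + bX₁X₂ + cX₂² ∈ ℤ[X₁, X₂] be a nonsingular binary quadratic form. Then R(Q(ℤ²)) is dense in ℚ₂ if and only if ν₂(b² − 4ac) is even and 2^{−ν₂(b²−4ac)}(b² − 4ac) ≡ 1 (mod 8). -/
namespace S15

lemma norm_two : ‖(2:ℚ_[2])‖ = 2⁻¹ := by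
  have := @Padic.norm_p 2 ⟨Nat.prime_two⟩
  norm_num at this
  rw [this]; norm_num

lemma two_dvd_or (Y : ℤ_[2]) : (2:ℤ_[2]) ∣ Y ∨ (2:ℤ_[2]) ∣ (Y - 1) := by
  have h2 : ∀ c : ZMod 2, c = 0 ∨ c = 1 := by decide
  have hker : ∀ Z : ℤ_[2], PadicInt.toZMod Z = 0 → (2:ℤ_[2]) ∣ Z := by
    intro Z hZ
    have : Z ∈ RingHom.ker (PadicInt.toZMod (p := 2)) := hZ
    rw [PadicInt.ker_toZMod, PadicInt.maximalIdeal_eq_span_p, Ideal.mem_span_singleton] at this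
    exact_mod_cast this
  rcases h2 (PadicInt.toZMod Y) with h | h
  · exact Or.inl (hker Y h)
  · refine Or.inr (hker _ ?_)
    rw [map_sub, h, map_one, sub_self]

lemma sq_unit_int (X : ℤ_[2]) (hx : ‖X‖ = 1) : ∃ Z : ℤ_[2], X^2 = 1 + 8*Z := by
  rcases two_dvd_or X with ⟨Y, hY⟩ | ⟨Y, hY⟩
  · exfalso
    have : ‖X‖ ≤ 2⁻¹ := by
      rw [hY, norm_mul]
      calc ‖(2:ℤ_[2])‖ * ‖Y‖ ≤ ‖(2:ℤ_[2])‖ * 1 := by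
            gcongr; exact PadicInt.norm_le_one Y
        _ ≤ 2⁻¹ := by
            rw [mul_one]
            have : ((2:ℕ):ℤ_[2]) = (2:ℤ_[2]) := by norm_cast
            rw [← this, PadicInt.norm_p]; norm_num
    rw [hx] at this; norm_num at this
  · have hX : X = 1 + 2*Y := by linear_combination hY
    rcases two_dvd_or Y with ⟨W, hW⟩ | ⟨W, hW⟩
    · exact ⟨W*(1+2*W), by rw [hX, hW]; ring⟩
    · have hY' : Y = 1 + 2*W := by linear_combination hW
      exact ⟨(1+2*W)*(1+W), by rw [hX, hY']; ring⟩

lemma sq_unit (x : ℚ_[2]) (hx : ‖x‖ = 1) : ∃ z : ℚ_[2], ‖z‖ ≤ 1 ∧ x^2 = 1 + 8*z := by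
  set X : ℤ_[2] := ⟨x, hx.le⟩ with hXdef
  have hXn : ‖X‖ = 1 := by rw [PadicInt.norm_def]; exact hx
  obtain ⟨Z, hZ⟩ := sq_unit_int X hXn
  refine ⟨(Z : ℚ_[2]), Z.2, ?_⟩
  have : ((X^2 : ℤ_[2]) : ℚ_[2]) = ((1 + 8*Z : ℤ_[2]) : ℚ_[2]) := by exact_mod_cast congrArg _ hZ
  push_cast at this
  exact this

lemma dvd8_of (n : ℤ) (z : ℚ_[2]) (hz : ‖z‖ ≤ 1) (h : (n:ℚ_[2]) = 8*z) : (8:ℤ) ∣ n := by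
  have h8 : ‖(8:ℚ_[2])‖ = (2:ℝ)^(-3:ℤ) := by
    have : (8:ℚ_[2]) = 2^3 := by norm_num
    rw [this, norm_pow, norm_two]; norm_num
  have : ‖(n:ℚ_[2])‖ ≤ ((2:ℕ):ℝ)^(-(3:ℕ):ℤ) := by
    rw [h, norm_mul, h8]
    calc (2:ℝ)^(-3:ℤ) * ‖z‖ ≤ (2:ℝ)^(-3:ℤ) * 1 := by gcongr
      _ = ((2:ℕ):ℝ)^(-(3:ℕ):ℤ) := by norm_num
  rw [Padic.norm_int_le_pow_iff_dvd] at this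
  exact_mod_cast this

lemma exists_exp (x : ℚ_[2]) (hx : x ≠ 0) : ∃ n : ℤ, ‖x‖ = (2:ℝ)^(-n) := by
  refine ⟨x.valuation, ?_⟩
  rw [Padic.norm_eq_zpow_neg_valuation hx]
  norm_num

lemma exp_inj {m n : ℤ} (h : (2:ℝ)^m = (2:ℝ)^n) : m = n := by
  exact zpow_right_injective₀ (by norm_num) (by norm_num) h


lemma sqrt_one_add (η : ℚ_[2]) (hη : ‖η‖ ≤ (2:ℝ)^(-3:ℤ)) :
    ∃ w : ℚ_[2], w^2 = 1 + η ∧ ‖w - 1‖ < 1 := by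
  have hη1 : ‖η‖ ≤ 1 := le_trans hη (by norm_num)
  set Z : ℤ_[2] := ⟨η, hη1⟩ with hZdef
  set F : Polynomial ℤ_[2] := Polynomial.X^2 - Polynomial.C (1 + Z) with hF
  have heval : F.eval 1 = -Z := by simp [hF]
  have hderiv : F.derivative = Polynomial.C 2 * Polynomial.X := by
    simp [hF, Polynomial.derivative_X_pow]; rw [one_add_one_eq_two, map_ofNat]
  have hdeval : F.derivative.eval 1 = 2 := by rw [hderiv]; simp
  have hnZ : ‖Z‖ ≤ (2:ℝ)^(-3:ℤ) := by rw [PadicInt.norm_def]; exact hη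
  have h2 : ‖(2:ℤ_[2])‖ = 2⁻¹ := by rw [PadicInt.norm_def]; exact_mod_cast norm_two
  have hcond : ‖F.eval 1‖ < ‖F.derivative.eval 1‖^2 := by
    rw [heval, hdeval, norm_neg, h2]
    calc ‖Z‖ ≤ (2:ℝ)^(-3:ℤ) := hnZ
      _ < (2⁻¹)^2 := by norm_num
  obtain ⟨z, hz1, hz2, -, -⟩ := hensels_lemma hcond
  refine ⟨(z:ℚ_[2]), ?_, ?_⟩
  · have : z^2 = 1 + Z := by
      have := hz1
      simp [hF, sub_eq_zero] at this
      exact this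
    have := congrArg (fun t : ℤ_[2] => (t : ℚ_[2])) this
    push_cast at this
    simpa using this
  · rw [Polynomial.coe_aeval_eq_eval, hdeval, h2] at hz2
    have : ‖z - 1‖ < 1 := lt_trans hz2 (by norm_num)
    rw [PadicInt.norm_def] at this
    push_cast at this
    exact this

lemma odd_norm_one (u : ℤ) (hu : ¬ (2:ℤ) ∣ u) : ‖(u:ℚ_[2])‖ = 1 := by
  refine le_antisymm (Padic.norm_int_le_one u) ?_
  by_contra h
  push_neg at h
  rw [Padic.norm_intCast_lt_one_iff] at h
  exact hu (by exact_mod_cast h)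

lemma decomp (D : ℤ) (hD : D ≠ 0) :
    D = 2^(padicValInt 2 D) * (D / 2^(padicValInt 2 D)) ∧
      ¬ (2:ℤ) ∣ (D / 2^(padicValInt 2 D)) := by
  have hdvd : (2:ℤ)^(padicValInt 2 D) ∣ D := by
    have := padicValInt_dvd (p := 2) D
    exact_mod_cast this
  constructor
  · exact (Int.mul_ediv_cancel' hdvd).symm
  · rintro ⟨w, hw⟩
    have : (2:ℤ)^(padicValInt 2 D + 1) ∣ D := by
      refine ⟨w, ?_⟩
      rw [pow_succ]
      calc D = 2^(padicValInt 2 D) * (D / 2^(padicValInt 2 D)) := (Int.mul_ediv_cancel' hdvd).symm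
        _ = 2^(padicValInt 2 D) * (2*w) := by rw [← hw]
        _ = 2^(padicValInt 2 D) * 2 * w := by ring
    rw [show ((2:ℤ) = ((2:ℕ):ℤ)) by norm_num, padicValInt_dvd_iff] at this
    rcases this with h | h
    · exact hD h
    · omega

lemma sq_iff (D : ℤ) (hD : D ≠ 0) :
    (∃ δ : ℚ_[2], δ^2 = (D:ℚ_[2])) ↔
    (Even (padicValInt 2 D) ∧ D / 2^(padicValInt 2 D) % 8 = 1) := by
  obtain ⟨hDeq, hodd⟩ := decomp D hD
  set v := padicValInt 2 D with hv
  set u := D / 2^v with hu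
  have hunorm : ‖(u:ℚ_[2])‖ = 1 := odd_norm_one u hodd
  have hDcast : (D:ℚ_[2]) = 2^v * (u:ℚ_[2]) := by
    have := congrArg (fun t : ℤ => (t : ℚ_[2])) hDeq
    push_cast at this
    exact this
  have norm_two_pow : ∀ j : ℕ, ‖(2:ℚ_[2])^j‖ = (2:ℝ)^(-(j:ℤ)) := by
    intro j
    rw [norm_pow, norm_two, inv_pow, zpow_neg, zpow_natCast]
  have hDnorm : ‖(D:ℚ_[2])‖ = (2:ℝ)^(-(v:ℤ)) := by
    rw [hDcast, norm_mul, norm_two_pow, hunorm, mul_one]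
  constructor
  · rintro ⟨δ, hδ⟩
    have hδne : δ ≠ 0 := by
      intro h0
      rw [h0] at hδ
      have : (D:ℚ_[2]) = 0 := by rw [← hδ]; ring
      exact hD (by exact_mod_cast this)
    obtain ⟨n, hn⟩ := exists_exp δ hδne
    have h2n : ‖δ‖^(2:ℕ) = (2:ℝ)^(-(v:ℤ)) := by rw [← norm_pow, hδ, hDnorm]
    rw [hn, ← zpow_natCast ((2:ℝ)^(-n)) 2, ← zpow_mul] at h2n
    have hveq : (v:ℤ) = 2*n := by
      have := exp_inj h2n; push_cast at this; omega
    have hn0 : 0 ≤ n := by omega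
    have hEven : Even v := by
      refine ⟨n.toNat, ?_⟩
      omega
    refine ⟨hEven, ?_⟩
    -- w = δ / 2^(n.toNat)
    set j := n.toNat with hj
    have hjn : (j:ℤ) = n := Int.toNat_of_nonneg hn0
    set w := δ / 2^j with hw
    have h2j : ‖(2:ℚ_[2])^j‖ = (2:ℝ)^(-n) := by
      rw [norm_two_pow, hjn]
    have hwnorm : ‖w‖ = 1 := by
      rw [hw, norm_div, hn, h2j]
      rw [div_self]
      positivity
    have hwsq : w^2 = (u:ℚ_[2]) := by
      rw [hw, div_pow]
      rw [hδ]
      have h2v : ((2:ℚ_[2])^j)^2 = (2:ℚ_[2])^v := by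
        rw [← pow_mul]
        congr 1
        omega
      rw [h2v, hDcast, mul_div_cancel_left₀ _ (pow_ne_zero _ two_ne_zero)]
    obtain ⟨z, hz1, hz2⟩ := sq_unit w hwnorm
    have : ((u - 1 : ℤ) : ℚ_[2]) = 8 * z := by
      push_cast
      rw [← hwsq, hz2]; ring
    have := dvd8_of _ _ hz1 this
    omega
  · rintro ⟨⟨j, hjv⟩, hu8⟩
    have hum : u = 1 + 8*(u/8) := by omega
    have hη : ‖((8*(u/8):ℤ):ℚ_[2])‖ ≤ (2:ℝ)^(-3:ℤ) := by
      have : ((8:ℤ):ℚ_[2]) = 2^3 := by norm_cast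
      push_cast
      rw [norm_mul, show ((8:ℚ_[2]) = 2^3) by norm_num, norm_pow, norm_two]
      calc (2⁻¹:ℝ)^3 * ‖((u/8:ℤ):ℚ_[2])‖ ≤ (2⁻¹:ℝ)^3 * 1 := by
            gcongr; exact Padic.norm_int_le_one _
        _ ≤ (2:ℝ)^(-3:ℤ) := by norm_num
    obtain ⟨w, hw1, -⟩ := sqrt_one_add _ hη
    refine ⟨2^j * w, ?_⟩
    have : ((u:ℤ):ℚ_[2]) = w^2 := by
      rw [hw1]
      have := congrArg (fun t : ℤ => ((t:ℤ):ℚ_[2])) hum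
      push_cast at this ⊢
      rw [this]
    rw [mul_pow, ← pow_mul, ← this, hDcast, show j*2 = v by omega]

-- ℚ₂ version of parity decomposition
lemma two_mul_or (y : ℚ_[2]) (hy : ‖y‖ ≤ 1) :
    ∃ z : ℚ_[2], ‖z‖ ≤ 1 ∧ (y = 2*z ∨ y = 1 + 2*z) := by
  set Y : ℤ_[2] := ⟨y, hy⟩ with hY
  rcases two_dvd_or Y with ⟨Z, hZ⟩ | ⟨Z, hZ⟩
  · refine ⟨(Z:ℚ_[2]), Z.2, Or.inl ?_⟩
    have := congrArg (fun t : ℤ_[2] => (t:ℚ_[2])) hZ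
    push_cast at this
    exact this
  · refine ⟨(Z:ℚ_[2]), Z.2, Or.inr ?_⟩
    have := congrArg (fun t : ℤ_[2] => (t:ℚ_[2])) hZ
    simp only [PadicInt.coe_sub, PadicInt.coe_mul, PadicInt.coe_one,
      show ((2:ℤ_[2]):ℚ_[2]) = 2 from by norm_cast] at this
    linear_combination this

lemma le1_mul {x y : ℚ_[2]} (hx : ‖x‖ ≤ 1) (hy : ‖y‖ ≤ 1) : ‖x*y‖ ≤ 1 := by
  rw [norm_mul]
  exact mul_le_one₀ hx (norm_nonneg _) hy

lemma le1_add {x y : ℚ_[2]} (hx : ‖x‖ ≤ 1) (hy : ‖y‖ ≤ 1) : ‖x+y‖ ≤ 1 :=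
  le_trans (Padic.nonarchimedean x y) (max_le hx hy)

lemma le1_sub {x y : ℚ_[2]} (hx : ‖x‖ ≤ 1) (hy : ‖y‖ ≤ 1) : ‖x-y‖ ≤ 1 := by
  rw [sub_eq_add_neg]
  exact le1_add hx (by rwa [norm_neg])

lemma le1_int (n : ℤ) : ‖(n:ℚ_[2])‖ ≤ 1 := Padic.norm_int_le_one n

lemma norm_sub_right {x y : ℚ_[2]} (h : ‖y‖ < ‖x‖) : ‖x - y‖ = ‖x‖ := by
  rw [sub_eq_add_neg, Padic.add_eq_max_of_ne (by rw [norm_neg]; exact ne_of_gt h)]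
  rw [norm_neg]
  exact max_eq_left h.le

lemma norm_sub_left {x y : ℚ_[2]} (h : ‖x‖ < ‖y‖) : ‖x - y‖ = ‖y‖ := by
  rw [← norm_neg, neg_sub]
  exact norm_sub_right h

lemma norm_two_zpow (n : ℤ) : ‖(2:ℚ_[2])^n‖ = (2:ℝ)^(-n) := by
  rw [norm_zpow, norm_two, inv_zpow, ← zpow_neg]

lemma unit_decomp {x : ℚ_[2]} (hx : x ≠ 0) :
    ∃ (n : ℤ) (w : ℚ_[2]), ‖w‖ = 1 ∧ x = (2:ℚ_[2])^n * w ∧ ‖x‖ = (2:ℝ)^(-n) := by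
  obtain ⟨n, hn⟩ := exists_exp x hx
  refine ⟨n, x / 2^n, ?_, ?_, hn⟩
  · rw [norm_div, hn, norm_two_zpow, div_self]
    positivity
  · rw [mul_div_cancel₀]
    exact zpow_ne_zero _ two_ne_zero

lemma norm_odd_int (n : ℤ) (h : n % 2 = 1) : ‖(n:ℚ_[2])‖ = 1 := by
  refine le_antisymm (le1_int n) ?_
  by_contra hlt
  push_neg at hlt
  rw [Padic.norm_intCast_lt_one_iff] at hlt
  omega

lemma le1_sq {x : ℚ_[2]} (hx : ‖x‖ ≤ 1) : ‖x^2‖ ≤ 1 := by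
  rw [norm_pow]
  exact pow_le_one₀ (norm_nonneg _) hx

lemma norm_one_add {w : ℚ_[2]} (hw : ‖w‖ < 1) : ‖1 + w‖ = 1 := by
  rw [Padic.add_eq_max_of_ne (by rw [norm_one]; exact (ne_of_gt hw)), norm_one]
  exact max_eq_left hw.le

lemma exp_lt {m n : ℤ} (h : (2:ℝ)^m < (2:ℝ)^n) : m < n := by
  exact lt_of_not_ge fun hle => absurd h (not_lt.mpr (zpow_le_zpow_right₀ one_le_two hle))

-- Case A : f = 1, t = 5
lemma caseA (u : ℤ) (hu : u % 2 = 1) (x y : ℚ_[2]) : x^2 - 2*(u:ℚ_[2])*y^2 ≠ 5 := by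
  intro h
  have h5 : ‖(5:ℚ_[2])‖ = 1 := by
    have := norm_odd_int 5 (by norm_num)
    push_cast at this
    exact this
  have hun : ‖(u:ℚ_[2])‖ = 1 := norm_odd_int u hu
  by_cases hy : y = 0
  · -- x^2 = 5
    subst hy
    rw [zero_pow two_ne_zero, mul_zero, sub_zero] at h
    have hx : x ≠ 0 := by
      intro h0
      rw [h0, zero_pow two_ne_zero] at h
      rw [← h, norm_zero] at h5
      norm_num at h5
    obtain ⟨n, hn⟩ := exists_exp x hx
    have hx1 : ‖x‖ = 1 := by
      have : ‖x‖^(2:ℕ) = 1 := by rw [← norm_pow, h, h5]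
      rw [hn, ← zpow_natCast, ← zpow_mul] at this
      have := exp_inj (by rw [this, zpow_zero] : (2:ℝ)^(-n*(2:ℕ)) = (2:ℝ)^(0:ℤ))
      rw [hn, show n = 0 by omega]; norm_num
    obtain ⟨z, hz1, hz2⟩ := sq_unit x hx1
    have h4 : ((4:ℤ):ℚ_[2]) = 8*z := by
      push_cast
      linear_combination hz2 - h
    have := dvd8_of 4 z hz1 h4
    omega
  · by_cases hx : x = 0
    · -- -2uy² = 5
      have h5' : (5:ℚ_[2]) = -(2*(u:ℚ_[2])*y^2) := by rw [← h, hx]; ring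
      obtain ⟨m, hm⟩ := exists_exp y hy
      have : ‖(5:ℚ_[2])‖ = (2:ℝ)^(-(2*m+1)) := by
        rw [h5', norm_neg, norm_mul, norm_mul, norm_two, hun, norm_pow, hm,
          ← zpow_natCast ((2:ℝ)^(-m)) 2, ← zpow_mul,
          show (2⁻¹:ℝ) = (2:ℝ)^(-1:ℤ) from by norm_num, mul_one, ← zpow_add₀ (two_ne_zero' ℝ)]
        congr 1
        ring
      rw [h5] at this
      have := exp_inj (by rw [← this, zpow_zero] : (2:ℝ)^(0:ℤ) = (2:ℝ)^(-(2*m+1)))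
      omega
    · obtain ⟨n, hn⟩ := exists_exp x hx
      obtain ⟨m, hm⟩ := exists_exp y hy
      have hx2 : ‖x^2‖ = (2:ℝ)^(-(2*n)) := by
        rw [norm_pow, hn, ← zpow_natCast ((2:ℝ)^(-n)) 2, ← zpow_mul]
        congr 1; ring
      have hy2 : ‖2*(u:ℚ_[2])*y^2‖ = (2:ℝ)^(-(2*m+1)) := by
        rw [norm_mul, norm_mul, norm_two, hun, norm_pow, hm,
          ← zpow_natCast ((2:ℝ)^(-m)) 2, ← zpow_mul,
          show (2⁻¹:ℝ) = (2:ℝ)^(-1:ℤ) from by norm_num, mul_one, ← zpow_add₀ (two_ne_zero' ℝ)]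
        congr 1; ring
      have hne : ‖x^2‖ ≠ ‖2*(u:ℚ_[2])*y^2‖ := by
        rw [hx2, hy2]
        intro hh
        have := exp_inj hh
        omega
      rcases lt_or_gt_of_ne hne with hlt | hgt
      · have : ‖(5:ℚ_[2])‖ = ‖2*(u:ℚ_[2])*y^2‖ := by rw [← h]; exact norm_sub_left hlt
        rw [h5, hy2] at this
        have := exp_inj (by rw [← this, zpow_zero] : (2:ℝ)^(0:ℤ) = (2:ℝ)^(-(2*m+1)))
        omega
      · have hnx2 : ‖(5:ℚ_[2])‖ = ‖x^2‖ := by rw [← h]; exact norm_sub_right hgt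
        rw [h5, hx2] at hnx2
        have hn0 : n = 0 := by
          have := exp_inj (by rw [← hnx2, zpow_zero] : (2:ℝ)^(0:ℤ) = (2:ℝ)^(-(2*n)))
          omega
        have hx1 : ‖x‖ = 1 := by rw [hn, hn0]; norm_num
        have hm0 : 0 ≤ m := by
          rw [hx2, hy2, hn0] at hgt
          have := exp_lt hgt
          omega
        have hy1 : ‖y‖ ≤ 1 := by
          rw [hm, ← zpow_zero (2:ℝ)]
          exact zpow_le_zpow_right₀ one_le_two (by omega)
        obtain ⟨z, hz1, hz2⟩ := sq_unit x hx1
        obtain ⟨w, hw1, hw2 | hw2⟩ := two_mul_or y hy1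
        · have h4 : ((4:ℤ):ℚ_[2]) = 8*(z - u*w^2) := by
            push_cast
            linear_combination hz2 - h - 2*(u:ℚ_[2])*(y + 2*w)*hw2
          have := dvd8_of 4 _ (le1_sub hz1 (le1_mul (le1_int u) (le1_sq hw1))) h4
          omega
        · have hyu : ‖y‖ = 1 := by
            rw [hw2]
            exact norm_one_add (by
              rw [norm_mul, norm_two]
              calc (2⁻¹:ℝ) * ‖w‖ ≤ 2⁻¹ * 1 := by gcongr
                _ < 1 := by norm_num)
          obtain ⟨z', hz1', hz2'⟩ := sq_unit y hyu
          have h4 : ((4 + 2*u:ℤ):ℚ_[2]) = 8*(z - 2*u*z') := by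
            push_cast
            linear_combination hz2 - h - 2*(u:ℚ_[2])*hz2'
          have := dvd8_of _ _ (le1_sub hz1 (le1_mul (by
              rw [show ((2:ℚ_[2])*(u:ℚ_[2])) = ((2*u:ℤ):ℚ_[2]) from by push_cast; ring]
              exact le1_int _) hz1')) h4
          omega

lemma exp_le_one {m : ℤ} (h : m ≤ 0) : (2:ℝ)^m ≤ 1 := by
  calc (2:ℝ)^m ≤ (2:ℝ)^(0:ℤ) := zpow_le_zpow_right₀ one_le_two (by omega)
    _ = 1 := zpow_zero 2

lemma norm_two_q : ‖(2:ℚ_[2])‖ = (2:ℝ)^(-1:ℤ) := by rw [norm_two]; norm_num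

-- Case B : f = 0, u ≡ 5 mod 8, t = 2
lemma caseB (u : ℤ) (hu : u % 8 = 5) (x y : ℚ_[2]) : x^2 - (u:ℚ_[2])*y^2 ≠ 2 := by
  intro h
  have hun : ‖(u:ℚ_[2])‖ = 1 := norm_odd_int u (by omega)
  by_cases hy : y = 0
  · subst hy
    rw [zero_pow two_ne_zero, mul_zero, sub_zero] at h
    have hx : x ≠ 0 := by
      intro h0; rw [h0, zero_pow two_ne_zero] at h
      exact two_ne_zero h.symm
    obtain ⟨n, hn⟩ := exists_exp x hx
    have : ‖x^2‖ = ‖(2:ℚ_[2])‖ := by rw [h]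
    rw [norm_pow, hn, ← zpow_natCast ((2:ℝ)^(-n)) 2, ← zpow_mul, norm_two_q] at this
    have := exp_inj this
    omega
  · by_cases hx : x = 0
    · have h2' : (2:ℚ_[2]) = -((u:ℚ_[2])*y^2) := by rw [← h, hx]; ring
      obtain ⟨m, hm⟩ := exists_exp y hy
      have : ‖(2:ℚ_[2])‖ = (2:ℝ)^(-(2*m)) := by
        rw [h2', norm_neg, norm_mul, hun, one_mul, norm_pow, hm,
          ← zpow_natCast ((2:ℝ)^(-m)) 2, ← zpow_mul]
        congr 1; ring
      rw [norm_two_q] at this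
      have := exp_inj this
      omega
    · obtain ⟨n, hn⟩ := exists_exp x hx
      obtain ⟨m, hm⟩ := exists_exp y hy
      have hx2 : ‖x^2‖ = (2:ℝ)^(-(2*n)) := by
        rw [norm_pow, hn, ← zpow_natCast ((2:ℝ)^(-n)) 2, ← zpow_mul]; congr 1; ring
      have hy2 : ‖(u:ℚ_[2])*y^2‖ = (2:ℝ)^(-(2*m)) := by
        rw [norm_mul, hun, one_mul, norm_pow, hm,
          ← zpow_natCast ((2:ℝ)^(-m)) 2, ← zpow_mul]; congr 1; ring
      by_cases hnm : n = m
      · -- equal valuations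
        subst hnm
        obtain ⟨q, rfl⟩ : ∃ q, u = 8*q+5 := ⟨(u-5)/8, by omega⟩
        push_cast at h hun
        set t : ℚ_[2] := (2:ℚ_[2])^n with ht
        have htne : t ≠ 0 := zpow_ne_zero _ two_ne_zero
        have hxd : x = t * (x/t) := by field_simp
        have hyd : y = t * (y/t) := by field_simp
        have hxu : ‖x/t‖ = 1 := by
          rw [norm_div, hn, ht, norm_two_zpow, div_self]
          positivity
        have hyu : ‖y/t‖ = 1 := by
          rw [norm_div, hm, ht, norm_two_zpow, div_self]
          positivity
        obtain ⟨z, hz1, hz2⟩ := sq_unit _ hxu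
        obtain ⟨z', hz1', hz2'⟩ := sq_unit _ hyu
        set ω : ℚ_[2] := -1 + 2*(-(q:ℚ_[2]) + z - (8*(q:ℚ_[2])+5)*z') with hω
        have hωn : ‖ω‖ = 1 := by
          have hrw : ω = -(1 - 2*(-(q:ℚ_[2]) + z - (8*(q:ℚ_[2])+5)*z')) := by rw [hω]; ring
          rw [hrw, norm_neg, norm_sub_right]
          · exact norm_one
          · rw [norm_one, norm_mul, norm_two]
            calc (2⁻¹:ℝ) * ‖-(q:ℚ_[2]) + z - (8*(q:ℚ_[2])+5)*z'‖ ≤ 2⁻¹ * 1 := by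
                  gcongr
                  exact le1_sub (le1_add (by rw [norm_neg]; exact le1_int q) hz1)
                    (le1_mul hun.le hz1')
              _ < 1 := by norm_num
        have hkey : t^2 * (4*ω) = 2 := by
          rw [hω]
          linear_combination h - (x + t*(x/t))*hxd - t^2*hz2
            + (8*(q:ℚ_[2])+5)*(y + t*(y/t))*hyd + (8*(q:ℚ_[2])+5)*t^2*hz2'
        have : ‖t^2 * (4*ω)‖ = ‖(2:ℚ_[2])‖ := by rw [hkey]
        rw [norm_mul, norm_mul, hωn, mul_one, norm_pow, ht, norm_two_zpow,
          ← zpow_natCast ((2:ℝ)^(-n)) 2, ← zpow_mul,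
          show ‖(4:ℚ_[2])‖ = (2:ℝ)^(-2:ℤ) from by
            rw [show (4:ℚ_[2]) = 2^2 by norm_num, norm_pow, norm_two]; norm_num,
          ← zpow_add₀ (two_ne_zero' ℝ), norm_two_q] at this
        have := exp_inj this
        omega
      · have hne : ‖x^2‖ ≠ ‖(u:ℚ_[2])*y^2‖ := by
          rw [hx2, hy2]
          intro hh; have := exp_inj hh; omega
        rcases lt_or_gt_of_ne hne with hlt | hgt
        · have : ‖(2:ℚ_[2])‖ = ‖(u:ℚ_[2])*y^2‖ := by rw [← h]; exact norm_sub_left hlt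
          rw [norm_two_q, hy2] at this
          have := exp_inj this
          omega
        · have : ‖(2:ℚ_[2])‖ = ‖x^2‖ := by rw [← h]; exact norm_sub_right hgt
          rw [norm_two_q, hx2] at this
          have := exp_inj this
          omega

-- Case C : f = 0, u ≡ 3 mod 4, t = 3
lemma caseC (u : ℤ) (hu : u % 4 = 3) (x y : ℚ_[2]) : x^2 - (u:ℚ_[2])*y^2 ≠ 3 := by
  intro h
  have hun : ‖(u:ℚ_[2])‖ = 1 := norm_odd_int u (by omega)
  have h3 : ‖(3:ℚ_[2])‖ = 1 := by
    have := norm_odd_int 3 (by norm_num)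
    push_cast at this
    exact this
  by_cases hy : y = 0
  · subst hy
    rw [zero_pow two_ne_zero, mul_zero, sub_zero] at h
    have hx : x ≠ 0 := by
      intro h0; rw [h0, zero_pow two_ne_zero] at h
      rw [← h, norm_zero] at h3; norm_num at h3
    obtain ⟨n, hn⟩ := exists_exp x hx
    have hx1 : ‖x‖ = 1 := by
      have : ‖x‖^(2:ℕ) = 1 := by rw [← norm_pow, h, h3]
      rw [hn, ← zpow_natCast, ← zpow_mul] at this
      have := exp_inj (by rw [this, zpow_zero] : (2:ℝ)^(-n*(2:ℕ)) = (2:ℝ)^(0:ℤ))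
      rw [hn, show n = 0 by omega]; norm_num
    obtain ⟨z, hz1, hz2⟩ := sq_unit x hx1
    have h4 : ((2:ℤ):ℚ_[2]) = 8*z := by
      push_cast
      linear_combination hz2 - h
    have := dvd8_of 2 z hz1 h4
    omega
  · by_cases hx : x = 0
    · -- -u y² = 3
      rw [hx, zero_pow two_ne_zero, zero_sub] at h
      obtain ⟨m, hm⟩ := exists_exp y hy
      have hnorm : ‖(u:ℚ_[2])*y^2‖ = 1 := by rw [← norm_neg, h, h3]
      rw [norm_mul, hun, one_mul, norm_pow, hm, ← zpow_natCast ((2:ℝ)^(-m)) 2, ← zpow_mul] at hnorm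
      have hm0 := exp_inj (show (2:ℝ)^(-m*((2:ℕ):ℤ)) = (2:ℝ)^(0:ℤ) by rw [hnorm]; norm_num)
      have hy1 : ‖y‖ = 1 := by rw [hm, show m = 0 by omega]; norm_num
      obtain ⟨z', hz1', hz2'⟩ := sq_unit y hy1
      rw [show y^2 = 1 + 8*z' from hz2'] at h
      have h4 : ((3 + u:ℤ):ℚ_[2]) = 8*(-(u:ℚ_[2])*z') := by
        push_cast
        linear_combination -h
      have := dvd8_of _ _ (by
        rw [show (-(u:ℚ_[2])*z') = -((u:ℚ_[2])*z') by ring, norm_neg]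
        exact le1_mul hun.le hz1') h4
      omega
    · obtain ⟨n, hn⟩ := exists_exp x hx
      obtain ⟨m, hm⟩ := exists_exp y hy
      have hx2 : ‖x^2‖ = (2:ℝ)^(-(2*n)) := by
        rw [norm_pow, hn, ← zpow_natCast ((2:ℝ)^(-n)) 2, ← zpow_mul]; congr 1; ring
      have hy2 : ‖(u:ℚ_[2])*y^2‖ = (2:ℝ)^(-(2*m)) := by
        rw [norm_mul, hun, one_mul, norm_pow, hm,
          ← zpow_natCast ((2:ℝ)^(-m)) 2, ← zpow_mul]; congr 1; ring
      by_cases hnm : n = m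
      · -- equal valuations: value has odd valuation, ‖3‖ = 1 even
        subst hnm
        obtain ⟨s, rfl⟩ : ∃ s, u = 4*s+3 := ⟨(u-3)/4, by omega⟩
        push_cast at h hun
        set t : ℚ_[2] := (2:ℚ_[2])^n with ht
        have htne : t ≠ 0 := zpow_ne_zero _ two_ne_zero
        have hxd : x = t * (x/t) := by field_simp
        have hyd : y = t * (y/t) := by field_simp
        have hxu : ‖x/t‖ = 1 := by
          rw [norm_div, hn, ht, norm_two_zpow, div_self]; positivity
        have hyu : ‖y/t‖ = 1 := by
          rw [norm_div, hm, ht, norm_two_zpow, div_self]; positivity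
        obtain ⟨z, hz1, hz2⟩ := sq_unit _ hxu
        obtain ⟨z', hz1', hz2'⟩ := sq_unit _ hyu
        set ω : ℚ_[2] := -1 + 2*(-(s:ℚ_[2]) + 2*z - 2*(4*(s:ℚ_[2])+3)*z') with hω
        have hωn : ‖ω‖ = 1 := by
          have hrw : ω = -(1 - 2*(-(s:ℚ_[2]) + 2*z - 2*(4*(s:ℚ_[2])+3)*z')) := by rw [hω]; ring
          rw [hrw, norm_neg, norm_sub_right]
          · exact norm_one
          · rw [norm_one, norm_mul, norm_two]
            calc (2⁻¹:ℝ) * ‖-(s:ℚ_[2]) + 2*z - 2*(4*(s:ℚ_[2])+3)*z'‖ ≤ 2⁻¹ * 1 := by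
                  gcongr
                  refine le1_sub (le1_add (by rw [norm_neg]; exact le1_int s)
                    (le1_mul (by rw [show (2:ℚ_[2]) = ((2:ℤ):ℚ_[2]) by push_cast; ring]; exact le1_int 2) hz1)) ?_
                  exact le1_mul (by
                    rw [show (2*(4*(s:ℚ_[2])+3)) = ((2*(4*s+3):ℤ):ℚ_[2]) by push_cast; ring]
                    exact le1_int _) hz1'
              _ < 1 := by norm_num
        have hkey : t^2 * (2*ω) = 3 := by
          rw [hω]
          linear_combination h - (x + t*(x/t))*hxd - t^2*hz2
            + (4*(s:ℚ_[2])+3)*(y + t*(y/t))*hyd + (4*(s:ℚ_[2])+3)*t^2*hz2'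
        have : ‖t^2 * (2*ω)‖ = ‖(3:ℚ_[2])‖ := by rw [hkey]
        rw [norm_mul, norm_mul, hωn, mul_one, norm_pow, ht, norm_two_zpow,
          ← zpow_natCast ((2:ℝ)^(-n)) 2, ← zpow_mul, norm_two_q,
          ← zpow_add₀ (two_ne_zero' ℝ), h3] at this
        have hfin := exp_inj (show (2:ℝ)^(-n*((2:ℕ):ℤ) + (-1)) = (2:ℝ)^(0:ℤ) by rw [this]; norm_num)
        omega
      · have hne : ‖x^2‖ ≠ ‖(u:ℚ_[2])*y^2‖ := by
          rw [hx2, hy2]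
          intro hh; have := exp_inj hh; omega
        rcases lt_or_gt_of_ne hne with hlt | hgt
        · -- ‖x²‖ < ‖uy²‖ : y unit, x = 2x₁
          have h1 : ‖(3:ℚ_[2])‖ = ‖(u:ℚ_[2])*y^2‖ := by rw [← h]; exact norm_sub_left hlt
          rw [h3, hy2] at h1
          have hm0 : m = 0 := by
            have := exp_inj (by rw [← h1, zpow_zero] : (2:ℝ)^(0:ℤ) = (2:ℝ)^(-(2*m)))
            omega
          have hy1 : ‖y‖ = 1 := by rw [hm, hm0]; norm_num
          have hn1 : 1 ≤ n := by
            rw [hx2, hy2] at hlt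
            have := exp_lt hlt
            omega
          have hx1 : ‖x/2‖ ≤ 1 := by
            rw [norm_div, hn, norm_two_q, ← zpow_sub₀ (two_ne_zero' ℝ)]
            exact exp_le_one (by omega)
          have hxd : x = 2*(x/2) := by field_simp
          obtain ⟨z', hz1', hz2'⟩ := sq_unit y hy1
          rw [show y^2 = 1 + 8*z' from hz2'] at h
          rw [hxd] at h
          obtain ⟨w, hw1, hw2 | hw2⟩ := two_mul_or (x/2) hx1
          · rw [hw2] at h
            have h4 : ((3+u:ℤ):ℚ_[2]) = 8*(2*w^2 - u*z') := by
              push_cast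
              linear_combination -h
            have := dvd8_of _ _ (le1_sub (le1_mul (by
                rw [show (2:ℚ_[2]) = ((2:ℤ):ℚ_[2]) by push_cast; ring]; exact le1_int 2) (le1_sq hw1))
              (le1_mul hun.le hz1')) h4
            omega
          · have hwu : ‖x/2‖ = 1 := by
              rw [hw2]
              exact norm_one_add (by
                rw [norm_mul, norm_two]
                calc (2⁻¹:ℝ) * ‖w‖ ≤ 2⁻¹ * 1 := by gcongr
                  _ < 1 := by norm_num)
            obtain ⟨v, hv1, hv2⟩ := sq_unit _ hwu
            have h4 : ((u - 1:ℤ):ℚ_[2]) = 8*(4*v - u*z') := by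
              push_cast
              linear_combination -h + 4*hv2
            have := dvd8_of _ _ (le1_sub (le1_mul (by
                rw [show (4:ℚ_[2]) = ((4:ℤ):ℚ_[2]) by push_cast; ring]; exact le1_int 4) hv1)
              (le1_mul hun.le hz1')) h4
            omega
        · -- ‖x²‖ > ‖uy²‖ : x unit, y = 2y₁
          have h1 : ‖(3:ℚ_[2])‖ = ‖x^2‖ := by rw [← h]; exact norm_sub_right hgt
          rw [h3, hx2] at h1
          have hn0 : n = 0 := by
            have := exp_inj (by rw [← h1, zpow_zero] : (2:ℝ)^(0:ℤ) = (2:ℝ)^(-(2*n)))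
            omega
          have hx1 : ‖x‖ = 1 := by rw [hn, hn0]; norm_num
          have hm1 : 1 ≤ m := by
            rw [hx2, hy2] at hgt
            have := exp_lt hgt
            omega
          have hy1' : ‖y/2‖ ≤ 1 := by
            rw [norm_div, hm, norm_two_q, ← zpow_sub₀ (two_ne_zero' ℝ)]
            exact exp_le_one (by omega)
          have hyd : y = 2*(y/2) := by field_simp
          obtain ⟨z, hz1, hz2⟩ := sq_unit x hx1
          rw [show x^2 = 1 + 8*z from hz2, hyd] at h
          obtain ⟨w, hw1, hw2 | hw2⟩ := two_mul_or (y/2) hy1'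
          · rw [hw2] at h
            have h4 : ((2:ℤ):ℚ_[2]) = 8*(z - 2*u*w^2) := by
              push_cast
              linear_combination -h
            have := dvd8_of _ _ (le1_sub hz1 (le1_mul (by
                rw [show (2*(u:ℚ_[2])) = ((2*u:ℤ):ℚ_[2]) by push_cast; ring]; exact le1_int _) (le1_sq hw1))) h4
            omega
          · have hwu : ‖y/2‖ = 1 := by
              rw [hw2]
              exact norm_one_add (by
                rw [norm_mul, norm_two]
                calc (2⁻¹:ℝ) * ‖w‖ ≤ 2⁻¹ * 1 := by gcongr
                  _ < 1 := by norm_num)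
            obtain ⟨v, hv1, hv2⟩ := sq_unit _ hwu
            have h4 : ((2 + 4*u:ℤ):ℚ_[2]) = 8*(z - 4*u*v) := by
              push_cast
              linear_combination -h - 4*(u:ℚ_[2])*hv2
            have := dvd8_of _ _ (le1_sub hz1 (le1_mul (by
                rw [show (4*(u:ℚ_[2])) = ((4*u:ℤ):ℚ_[2]) by push_cast; ring]; exact le1_int _) hv1)) h4
            omega

lemma not_sq_t (D : ℤ) (hD : D ≠ 0)
    (h : ¬(Even (padicValInt 2 D) ∧ D / 2^(padicValInt 2 D) % 8 = 1)) :
    ∃ t : ℚ_[2], t ≠ 0 ∧ ∀ x y : ℚ_[2], x^2 - (D:ℚ_[2])*y^2 ≠ t := by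
  obtain ⟨hDeq, hodd⟩ := decomp D hD
  set v := padicValInt 2 D with hv
  set u := D / 2^v with hu
  have hDcast : (D:ℚ_[2]) = 2^v * (u:ℚ_[2]) := by
    have := congrArg (fun t : ℤ => (t : ℚ_[2])) hDeq
    push_cast at this
    exact this
  set e := v / 2 with he
  by_cases hf : v % 2 = 1
  · -- odd valuation : t = 5
    have h2v : (2:ℚ_[2])^v = 2*((2:ℚ_[2])^e)^2 := by
      rw [show v = e*2+1 by omega, pow_succ, pow_mul]
      ring
    refine ⟨5, by norm_num, fun x y hxy => ?_⟩
    have hrw : x^2 - 2*(u:ℚ_[2])*((2:ℚ_[2])^e * y)^2 = x^2 - (D:ℚ_[2])*y^2 := by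
      rw [hDcast, h2v]; ring
    exact caseA u (by omega) x ((2:ℚ_[2])^e * y) (by rw [hrw]; exact hxy)
  · -- even valuation
    have h2v : (2:ℚ_[2])^v = ((2:ℚ_[2])^e)^2 := by
      rw [show v = e*2 by omega, pow_mul]
    have hEven : Even v := ⟨e, by omega⟩
    have hu8 : u % 8 ≠ 1 := fun hc => h ⟨hEven, hc⟩
    have huodd : u % 2 = 1 := by omega
    have hrw : ∀ x y : ℚ_[2], x^2 - (u:ℚ_[2])*((2:ℚ_[2])^e * y)^2 = x^2 - (D:ℚ_[2])*y^2 := by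
      intro x y
      rw [hDcast, h2v]; ring
    by_cases hu5 : u % 8 = 5
    · refine ⟨2, two_ne_zero, fun x y hxy => ?_⟩
      exact caseB u hu5 x ((2:ℚ_[2])^e * y) (by rw [hrw]; exact hxy)
    · have hu3 : u % 4 = 3 := by omega
      refine ⟨3, by norm_num, fun x y hxy => ?_⟩
      exact caseC u hu3 x ((2:ℚ_[2])^e * y) (by rw [hrw]; exact hxy)

lemma rep (a b c : ℤ) (ha : a ≠ 0) (q : ℚ_[2])
    (hq : q ∈ quotSet {y : ℚ_[2] | ∃ m k : ℤ,
        ((a * m ^ 2 + b * m * k + c * k ^ 2 : ℤ) : ℚ_[2]) = y}) :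
    ∃ x y : ℚ_[2], x^2 - ((b^2 - 4*a*c : ℤ):ℚ_[2])*y^2 = q := by
  obtain ⟨vv, ⟨m, k, hv⟩, ww, ⟨m', k', hw⟩, hw0, rfl⟩ := hq
  have ha' : (a:ℚ_[2]) ≠ 0 := Int.cast_ne_zero.mpr ha
  set D : ℚ_[2] := ((b^2 - 4*a*c : ℤ):ℚ_[2]) with hD
  set A : ℚ_[2] := 2*a*m + b*k with hA
  set B : ℚ_[2] := (k:ℚ_[2]) with hB
  set A' : ℚ_[2] := 2*a*m' + b*k' with hA'
  set B' : ℚ_[2] := (k':ℚ_[2]) with hB'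
  have hAv : A^2 - D*B^2 = 4*a*vv := by
    rw [hA, hB, hD, ← hv]
    push_cast
    ring
  have hAw : A'^2 - D*B'^2 = 4*a*ww := by
    rw [hA', hB', hD, ← hw]
    push_cast
    ring
  set den : ℚ_[2] := A'^2 - D*B'^2 with hden
  have hdne : den ≠ 0 := by
    rw [hAw]
    exact mul_ne_zero (by norm_num [ha']) hw0
  refine ⟨(A*A' - D*B*B')/den, (A*B' - A'*B)/den, ?_⟩
  have hnum : (A*A' - D*B*B')^2 - D*(A*B' - A'*B)^2 = (A^2 - D*B^2)*den := by
    rw [hden]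
    ring
  rw [div_pow, div_pow, ← mul_div_assoc, ← sub_div, hnum, pow_two den,
    mul_div_mul_right _ _ hdne, hAv, hAw,
    mul_div_mul_left _ _ (by norm_num [ha'] : (4*(a:ℚ_[2])) ≠ 0)]

lemma not_dense (a b c : ℤ) (hns : b^2 - 4*a*c ≠ 0)
    (h : ¬(Even (padicValInt 2 (b^2-4*a*c)) ∧
      (b^2-4*a*c) / 2^(padicValInt 2 (b^2-4*a*c)) % 8 = 1)) :
    ¬ Dense (quotSet {y : ℚ_[2] | ∃ m k : ℤ,
        ((a * m ^ 2 + b * m * k + c * k ^ 2 : ℤ) : ℚ_[2]) = y}) := by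
  intro hdense
  have ha : a ≠ 0 := by
    rintro rfl
    refine h ((sq_iff _ hns).mp ⟨(b:ℚ_[2]), ?_⟩)
    push_cast
    ring
  obtain ⟨t, ht0, htS⟩ := not_sq_t (b^2-4*a*c) hns h
  have htn : 0 < ‖t‖ := norm_pos_iff.mpr ht0
  have htc := hdense t
  rw [Metric.mem_closure_iff] at htc
  obtain ⟨q, hqS, hdist⟩ := htc (‖t‖/8) (by positivity)
  rw [dist_eq_norm] at hdist
  have hq0 : q ≠ 0 := by
    rintro rfl
    rw [sub_zero] at hdist
    linarith
  have hη : ‖(q - t)/t‖ ≤ (2:ℝ)^(-3:ℤ) := by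
    rw [norm_div, ← norm_neg, neg_sub]
    calc ‖t - q‖/‖t‖ ≤ (‖t‖/8)/‖t‖ := by gcongr
      _ = 8⁻¹ := by field_simp
      _ ≤ (2:ℝ)^(-3:ℤ) := by norm_num
  obtain ⟨w, hw1, hw2⟩ := sqrt_one_add _ hη
  have hwq : w^2 = q/t := by
    rw [hw1]
    field_simp
    ring
  have hw0 : w ≠ 0 := by
    intro h0
    rw [h0, zero_pow two_ne_zero] at hwq
    rcases div_eq_zero_iff.mp hwq.symm with hh | hh
    · exact hq0 hh
    · exact ht0 hh
  obtain ⟨x, y, hxy⟩ := rep a b c ha q hqS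
  refine htS (x/w) (y/w) ?_
  rw [div_pow, div_pow, ← mul_div_assoc, ← sub_div, hxy, hwq,
    div_div_eq_mul_div, mul_comm, mul_div_assoc, div_self hq0, mul_one]

lemma sub_le_max (x y : ℚ_[2]) : ‖x - y‖ ≤ max ‖x‖ ‖y‖ := by
  rw [sub_eq_add_neg]
  exact le_trans (Padic.nonarchimedean x (-y)) (by rw [norm_neg])

lemma norm_add_eq_left {x y : ℚ_[2]} (h : ‖y‖ < ‖x‖) : ‖x + y‖ = ‖x‖ := by
  rw [Padic.add_eq_max_of_ne (ne_of_gt h)]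
  exact max_eq_left h.le

lemma shrink (M r : ℝ) (hr : 0 < r) : ∃ K : ℕ, M * (2:ℝ)⁻¹^K ≤ r := by
  rcases le_or_gt M 0 with hM | hM
  · exact ⟨0, by nlinarith⟩
  · obtain ⟨K, hK⟩ := exists_pow_lt_of_lt_one (div_pos hr hM) (by norm_num : (2:ℝ)⁻¹ < 1)
    refine ⟨K, ?_⟩
    rw [lt_div_iff₀ hM] at hK
    nlinarith

lemma int_approx (τ : ℚ_[2]) (hτ : ‖τ‖ ≤ 1) {μ : ℝ} (hμ : 0 < μ) :
    ∃ m : ℤ, ‖τ - (m:ℚ_[2])‖ < μ := by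
  set T : ℤ_[2] := ⟨τ, hτ⟩ with hT
  obtain ⟨m, hm⟩ := PadicInt.denseRange_intCast.exists_dist_lt T hμ
  refine ⟨m, ?_⟩
  rw [dist_eq_norm] at hm
  have : ‖T - (m:ℤ_[2])‖ = ‖τ - (m:ℚ_[2])‖ := by
    rw [PadicInt.norm_def, PadicInt.coe_sub, PadicInt.coe_intCast]
  rwa [← this]

lemma key_approx (a b c : ℤ) (hns : b^2 - 4*a*c ≠ 0) (δ : ℚ_[2])
    (hδ : δ^2 = ((b^2 - 4*a*c : ℤ):ℚ_[2])) :
    ∃ (k : ℤ) (C : ℚ_[2]), C ≠ 0 ∧ ∀ s : ℚ_[2], ‖s‖ ≤ 1 →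
      ∃ τ : ℚ_[2], ‖τ‖ ≤ 1 ∧ (a:ℚ_[2])*τ^2 + b*τ*k + c*k^2 = C*s := by
  by_cases ha : a = 0
  · -- b ≠ 0 ; use k = 2^K, C = b·2^K, τ = s - c·2^K/b
    subst ha
    have hb : b ≠ 0 := by intro h0; rw [h0] at hns; simp at hns
    have hb' : (b:ℚ_[2]) ≠ 0 := Int.cast_ne_zero.mpr hb
    obtain ⟨K, hK⟩ := shrink ‖(c:ℚ_[2])‖ ‖(b:ℚ_[2])‖ (norm_pos_iff.mpr hb')
    refine ⟨2^K, (b:ℚ_[2]) * 2^K, mul_ne_zero hb' (pow_ne_zero _ two_ne_zero), fun s hs => ?_⟩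
    refine ⟨s - (c:ℚ_[2])*2^K/(b:ℚ_[2]), ?_, ?_⟩
    · refine le_trans (sub_le_max _ _) (max_le hs ?_)
      rw [norm_div, norm_mul, norm_pow, norm_two]
      rw [div_le_one (norm_pos_iff.mpr hb')]
      exact hK
    · push_cast
      field_simp
      ring
  · -- a ≠ 0
    have ha' : (a:ℚ_[2]) ≠ 0 := Int.cast_ne_zero.mpr ha
    have h2a : (0:ℝ) < ‖2*(a:ℚ_[2])‖ := norm_pos_iff.mpr (by simp [ha'])
    obtain ⟨K, hK⟩ := shrink (max ‖δ‖ ‖(b:ℚ_[2])‖) ‖2*(a:ℚ_[2])‖ h2a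
    set T : ℚ_[2] := 2^K with hT
    have hTn : ‖T‖ = (2:ℝ)⁻¹^K := by rw [hT, norm_pow, norm_two]
    have hD0 : ((b^2 - 4*a*c : ℤ):ℚ_[2]) ≠ 0 := Int.cast_ne_zero.mpr hns
    refine ⟨2^K, ((b^2 - 4*a*c : ℤ):ℚ_[2]) * T^2 * 8 / (4*a), ?_, fun s hs => ?_⟩
    · apply div_ne_zero
      · exact mul_ne_zero (mul_ne_zero hD0 (by rw [hT]; exact pow_ne_zero _ (pow_ne_zero _ two_ne_zero))) (by norm_num)
      · simp [ha']
    · have hη : ‖8*s‖ ≤ (2:ℝ)^(-3:ℤ) := by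
        rw [norm_mul, show (8:ℚ_[2]) = 2^3 by norm_num, norm_pow, norm_two]
        calc (2⁻¹:ℝ)^3 * ‖s‖ ≤ (2⁻¹:ℝ)^3 * 1 := by gcongr
          _ ≤ (2:ℝ)^(-3:ℤ) := by norm_num
      obtain ⟨w, hw1, hw2⟩ := sqrt_one_add _ hη
      have hwle : ‖w‖ ≤ 1 := by
        have : w = 1 + (w - 1) := by ring
        rw [this]
        exact le1_add (by norm_num) hw2.le
      refine ⟨T*(δ*w - b)/(2*a), ?_, ?_⟩
      · rw [norm_div, norm_mul, hTn]
        rw [div_le_one h2a]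
        calc (2⁻¹:ℝ)^K * ‖δ*w - b‖ ≤ (2⁻¹:ℝ)^K * max ‖δ‖ ‖(b:ℚ_[2])‖ := by
              gcongr
              refine le_trans (sub_le_max _ _) (max_le ?_ (le_max_right _ _))
              calc ‖δ*w‖ ≤ ‖δ‖*1 := by rw [norm_mul]; gcongr
                _ ≤ max ‖δ‖ ‖(b:ℚ_[2])‖ := by rw [mul_one]; exact le_max_left _ _
          _ ≤ ‖2*(a:ℚ_[2])‖ := by rw [mul_comm]; exact hK
      · -- the algebraic identity
        set τ : ℚ_[2] := T*(δ*w - b)/(2*a) with hτ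
        have h2aτ : 2*(a:ℚ_[2])*τ = T*(δ*w - b) := by
          rw [hτ, mul_div_assoc']
          rw [mul_div_cancel_left₀]
          simp [ha']
        have hC4a : (4*(a:ℚ_[2])) * (((b^2 - 4*a*c : ℤ):ℚ_[2]) * T^2 * 8 / (4*a)) =
            8*((b^2 - 4*a*c : ℤ):ℚ_[2])*T^2 := by
          rw [mul_div_assoc']
          rw [mul_div_cancel_left₀]
          · ring
          · simp [ha']
        have hmain : (4*(a:ℚ_[2])) * ((a:ℚ_[2])*τ^2 + b*τ*(2^K:ℤ) + c*((2^K:ℤ):ℚ_[2])^2)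
            = (4*(a:ℚ_[2])) * ((((b^2 - 4*a*c : ℤ):ℚ_[2]) * T^2 * 8 / (4*a)) * s) := by
          have hTcast : ((2^K:ℤ):ℚ_[2]) = T := by rw [hT]; push_cast; ring
          have hδ' : δ^2 = (b:ℚ_[2])^2 - 4*(a:ℚ_[2])*(c:ℚ_[2]) := by rw [hδ]; push_cast; ring
          rw [hTcast, ← mul_assoc (4*(a:ℚ_[2])) _ s, hC4a]
          push_cast
          linear_combination (2*(a:ℚ_[2])*τ + T*(δ*w-(b:ℚ_[2])) + 2*(b:ℚ_[2])*T)*h2aτ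
            + T^2*w^2*hδ' + T^2*((b:ℚ_[2])^2 - 4*(a:ℚ_[2])*(c:ℚ_[2]))*hw1
        exact mul_left_cancel₀ (by simp [ha'] : (4*(a:ℚ_[2])) ≠ 0) hmain

lemma dense_of_sq (a b c : ℤ) (hns : b^2 - 4*a*c ≠ 0) (δ : ℚ_[2])
    (hδ : δ^2 = ((b^2 - 4*a*c : ℤ):ℚ_[2])) :
    Dense (quotSet {y : ℚ_[2] | ∃ m k : ℤ,
        ((a * m ^ 2 + b * m * k + c * k ^ 2 : ℤ) : ℚ_[2]) = y}) := by
  obtain ⟨k, C, hC, happ⟩ := key_approx a b c hns δ hδ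
  rw [Metric.dense_iff]
  intro t ε hε
  obtain ⟨j, hj⟩ := shrink ‖t‖ 1 one_pos
  set s' : ℚ_[2] := 2^j with hs'
  set s : ℚ_[2] := s' * t with hs
  have hs'n : ‖s'‖ = (2⁻¹:ℝ)^j := by rw [hs', norm_pow, norm_two]
  have hs'le : ‖s'‖ ≤ 1 := by
    rw [hs'n]
    exact pow_le_one₀ (by norm_num) (by norm_num)
  have hs'0 : s' ≠ 0 := pow_ne_zero _ two_ne_zero
  have hsle : ‖s‖ ≤ 1 := by rw [hs, norm_mul, hs'n, mul_comm]; exact hj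
  obtain ⟨τ, hτ1, hτ2⟩ := happ s hsle
  obtain ⟨τ', hτ1', hτ2'⟩ := happ s' hs'le
  set ρ := ‖C*s'‖ with hρ
  have hρ0 : 0 < ρ := norm_pos_iff.mpr (mul_ne_zero hC hs'0)
  have hs'pos : 0 < ‖s'‖ := norm_pos_iff.mpr hs'0
  set μ := min (ρ/2) (ε*ρ*‖s'‖/2) with hμ
  have hμ0 : 0 < μ := lt_min (by positivity) (by positivity)
  obtain ⟨m, hm⟩ := int_approx τ hτ1 hμ0
  obtain ⟨m', hm'⟩ := int_approx τ' hτ1' hμ0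
  set v : ℚ_[2] := ((a*m^2 + b*m*k + c*k^2 : ℤ):ℚ_[2]) with hv
  set v' : ℚ_[2] := ((a*m'^2 + b*m'*k + c*k^2 : ℤ):ℚ_[2]) with hv'
  have herr : ∀ (m₀ : ℤ) (τ₀ : ℚ_[2]), ‖τ₀‖ ≤ 1 → ‖τ₀ - m₀‖ < μ →
      ‖((a*m₀^2 + b*m₀*k + c*k^2 : ℤ):ℚ_[2]) - ((a:ℚ_[2])*τ₀^2 + b*τ₀*k + c*k^2)‖ < μ := by
    intro m₀ τ₀ hτ₀ hd
    have hfac : ((a*m₀^2 + b*m₀*k + c*k^2 : ℤ):ℚ_[2]) - ((a:ℚ_[2])*τ₀^2 + b*τ₀*k + c*k^2)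
        = ((m₀:ℚ_[2]) - τ₀) * ((a:ℚ_[2])*((m₀:ℚ_[2])+τ₀) + (b:ℚ_[2])*(k:ℚ_[2])) := by
      push_cast
      ring
    rw [hfac, norm_mul]
    calc ‖(m₀:ℚ_[2]) - τ₀‖ * ‖(a:ℚ_[2])*((m₀:ℚ_[2])+τ₀) + (b:ℚ_[2])*(k:ℚ_[2])‖
        ≤ ‖(m₀:ℚ_[2]) - τ₀‖ * 1 := by
          gcongr
          exact le1_add (le1_mul (le1_int a) (le1_add (le1_int m₀) hτ₀))
            (le1_mul (le1_int b) (le1_int k))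
      _ = ‖τ₀ - (m₀:ℚ_[2])‖ := by rw [mul_one, ← norm_neg, neg_sub]
      _ < μ := hd
  have he : ‖v - C*s‖ < μ := by
    have := herr m τ hτ1 hm
    rwa [hτ2] at this
  have he' : ‖v' - C*s'‖ < μ := by
    have := herr m' τ' hτ1' hm'
    rwa [hτ2'] at this
  have hμρ : μ < ρ := lt_of_le_of_lt (min_le_left _ _) (by linarith)
  have hv'norm : ‖v'‖ = ρ := by
    have hsplit : v' = C*s' + (v' - C*s') := by ring
    rw [hsplit, norm_add_eq_left (lt_of_lt_of_le (lt_trans he' hμρ) (le_of_eq hρ.symm))]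
  have hv'0 : v' ≠ 0 := by
    rw [← norm_pos_iff, hv'norm]
    exact hρ0
  refine ⟨v/v', ?_, v, ⟨m, k, rfl⟩, v', ⟨m', k, rfl⟩, hv'0, rfl⟩
  rw [Metric.mem_ball, dist_eq_norm]
  have htsplit : t = s/s' := by rw [hs, mul_comm, mul_div_assoc, div_self hs'0, mul_one]
  have hkey : v/v' - t = ((v - C*s)*s' - s*(v' - C*s'))/(v'*s') := by
    rw [htsplit]
    field_simp
    ring
  rw [hkey, norm_div, norm_mul, hv'norm]
  have hnum : ‖(v - C*s)*s' - s*(v' - C*s')‖ < μ := by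
    refine lt_of_le_of_lt (sub_le_max _ _) (max_lt ?_ ?_)
    · calc ‖(v - C*s)*s'‖ = ‖v - C*s‖*‖s'‖ := norm_mul _ _
        _ ≤ ‖v - C*s‖*1 := by gcongr
        _ < μ := by rw [mul_one]; exact he
    · calc ‖s*(v' - C*s')‖ = ‖s‖*‖v' - C*s'‖ := norm_mul _ _
        _ ≤ 1*‖v' - C*s'‖ := by gcongr
        _ < μ := by rw [one_mul]; exact he'
  calc ‖(v - C*s)*s' - s*(v' - C*s')‖/(ρ*‖s'‖) < μ/(ρ*‖s'‖) := by gcongr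
    _ ≤ (ε*ρ*‖s'‖/2)/(ρ*‖s'‖) := by gcongr; exact min_le_right _ _
    _ = ε/2 := by field_simp
    _ < ε := by linarith

end S15

theorem stmt15 (a b c : ℤ) (hns : b ^ 2 - 4 * a * c ≠ 0) :
    Dense (quotSet {y : ℚ_[2] | ∃ m k : ℤ,
        ((a * m ^ 2 + b * m * k + c * k ^ 2 : ℤ) : ℚ_[2]) = y}) ↔
    Even (padicValInt 2 (b ^ 2 - 4 * a * c)) ∧
      (b ^ 2 - 4 * a * c) / 2 ^ padicValInt 2 (b ^ 2 - 4 * a * c) % 8 = 1 := by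
  constructor
  · intro hdense
    by_contra h
    exact S15.not_dense a b c hns h hdense
  · intro h
    obtain ⟨δ, hδ⟩ := (S15.sq_iff _ hns).mpr h
    exact S15.dense_of_sq a b c hns δ hδ
end
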